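/- arXiv:2508.20360 — 8 statements merged into one kernel-verified Lean document; each statement's English description precedes it below -/
import Mathlib

section
/- Let (a_1,…,a_n) be a permutation of [n] with n ≥ 1, and let N be the maximum length of an increasing-first 1-modal subsequence (an increasing-then-decreasing subsequence) of (a_1,…,a_n). Then 2n ≤ N(N+1). -/
/-- `b : Fin m → ℤ` is an increasing-first `k`-modal sequence: it can be cut into at most
`k + 1` segments, alternately strictly increasing and strictly decreasing, starting with an
increasing segment (segments may be degenerate). Sequences of length at most 1 always qualify. -/
def IncFirstModal (k : ℕ) {m : ℕ} (b : Fin m → ℤ) : Prop :=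
  ∃ j : ℕ → ℕ, Monotone j ∧ j 0 = 0 ∧ m - 1 ≤ j (k + 1) ∧
    ∀ ℓ s, ℓ ≤ k → j ℓ ≤ s → s + 1 ≤ j (ℓ + 1) →
      ∀ (hs : s < m) (hs1 : s + 1 < m),
        if Even ℓ then b ⟨s, hs⟩ < b ⟨s + 1, hs1⟩ else b ⟨s + 1, hs1⟩ < b ⟨s, hs⟩

/-- `b : Fin m → ℤ` is a decreasing-first `k`-modal sequence: at most `k + 1` alternately
strictly decreasing and strictly increasing segments, starting with a decreasing segment. -/
def DecFirstModal (k : ℕ) {m : ℕ} (b : Fin m → ℤ) : Prop :=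
  ∃ j : ℕ → ℕ, Monotone j ∧ j 0 = 0 ∧ m - 1 ≤ j (k + 1) ∧
    ∀ ℓ s, ℓ ≤ k → j ℓ ≤ s → s + 1 ≤ j (ℓ + 1) →
      ∀ (hs : s < m) (hs1 : s + 1 < m),
        if Even ℓ then b ⟨s + 1, hs1⟩ < b ⟨s, hs⟩ else b ⟨s, hs⟩ < b ⟨s + 1, hs1⟩

/-- `a : Fin n → ℤ` is a permutation of `[n] = {1, …, n}`. -/
def IsPermOn (n : ℕ) (a : Fin n → ℤ) : Prop :=
  Function.Injective a ∧ ∀ i, 1 ≤ a i ∧ a i ≤ (n : ℤ)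

/-- The subsequence selected by the strictly monotone index map `s` ends at position `i`. -/
def EndsAt {n L : ℕ} (s : Fin L → Fin n) (i : Fin n) : Prop :=
  ∃ h : 0 < L, s ⟨L - 1, Nat.sub_lt h Nat.one_pos⟩ = i

/-- The subsequence selected by the strictly monotone index map `s` starts at position `i`. -/
def StartsAt {n L : ℕ} (s : Fin L → Fin n) (i : Fin n) : Prop :=
  ∃ h : 0 < L, s ⟨0, h⟩ = i

/-!
For a position `i`, let `f i + 1` be the length of a longest increasing subsequence ending at `i`
and `g i + 1` that of a longest decreasing subsequence starting at `i`. Gluing two such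
subsequences at `i` gives an increasing-then-decreasing subsequence with `f i + g i + 1` terms,
so `f i + g i < N`. As in the Erdős–Szekeres argument, `i ↦ (f i, g i)` is injective: for `i < j`
either `a i < a j` and `f i < f j`, or `a j < a i` and `g j < g i`. There are only `N (N + 1) / 2`
pairs of naturals with sum `< N`.
-/

theorem incFirstModal_one_of_peak {m : ℕ} (b : Fin m → ℤ) (p : ℕ)
    (hinc : ∀ k (hk : k + 1 < m), k < p → b ⟨k, by omega⟩ < b ⟨k + 1, hk⟩)
    (hdec : ∀ k (hk : k + 1 < m), p ≤ k → b ⟨k + 1, hk⟩ < b ⟨k, by omega⟩) :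
    IncFirstModal 1 b := by
  refine ⟨fun ℓ => if ℓ = 0 then 0 else if ℓ = 1 then p else max p (m - 1), ?_, rfl, by simp, ?_⟩
  · intro x y hxy
    dsimp only
    split_ifs <;> omega
  · intro ℓ k hℓ hjk hkj _ hk1
    interval_cases ℓ
    · rw [if_pos (by decide)]
      exact hinc k hk1 (by simpa using hkj)
    · rw [if_neg (by decide)]
      exact hdec k hk1 (by simpa using hjk)

section PeakJoin

variable {ι : Type*} {p q : ℕ}

def peakJoin (s : Fin (p + 1) → ι) (t : Fin (q + 1) → ι) : Fin (p + q + 1) → ι :=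
  fun k => if h : (k : ℕ) ≤ p then s ⟨k, by omega⟩ else t ⟨k - p, by omega⟩

variable {s : Fin (p + 1) → ι} {t : Fin (q + 1) → ι}

theorem peakJoin_of_le {k : ℕ} (hk : k ≤ p) (hk' : k < p + q + 1) :
    peakJoin s t ⟨k, hk'⟩ = s ⟨k, by omega⟩ :=
  dif_pos hk

theorem peakJoin_of_ge (hst : s (Fin.last p) = t 0) {k : ℕ} (hk : p ≤ k) (hk' : k < p + q + 1) :
    peakJoin s t ⟨k, hk'⟩ = t ⟨k - p, by omega⟩ := by
  rcases hk.eq_or_lt with rfl | hlt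
  · simp only [peakJoin, le_refl, ↓reduceDIte, Nat.sub_self]
    exact hst
  · exact dif_neg (by simp only; omega)

theorem strictMono_peakJoin [Preorder ι] (hs : StrictMono s) (ht : StrictMono t)
    (hst : s (Fin.last p) = t 0) : StrictMono (peakJoin s t) := by
  rw [Fin.strictMono_iff_lt_succ]
  rintro ⟨k, hk⟩
  rcases lt_or_ge k p with hkp | hkp
  · rw [Fin.castSucc_mk, Fin.succ_mk, peakJoin_of_le hkp.le, peakJoin_of_le hkp]
    exact hs (Fin.mk_lt_mk.2 k.lt_succ_self)
  · rw [Fin.castSucc_mk, Fin.succ_mk, peakJoin_of_ge hst hkp, peakJoin_of_ge hst (by omega)]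
    exact ht (Fin.mk_lt_mk.2 (by omega))

theorem incFirstModal_one_peakJoin (a : ι → ℤ) (has : StrictMono (a ∘ s))
    (hat : StrictAnti (a ∘ t)) (hst : s (Fin.last p) = t 0) :
    IncFirstModal 1 (a ∘ peakJoin s t) := by
  refine incFirstModal_one_of_peak _ p (fun k hk hkp => ?_) (fun k hk hkp => ?_)
  · simp only [Function.comp_apply]
    rw [peakJoin_of_le hkp.le, peakJoin_of_le hkp]
    exact has (Fin.mk_lt_mk.2 k.lt_succ_self)
  · simp only [Function.comp_apply]
    rw [peakJoin_of_ge hst hkp, peakJoin_of_ge hst (by omega)]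
    exact hat (Fin.mk_lt_mk.2 (by omega))

end PeakJoin

section LongestRuns

variable {ι α : Type*} [Preorder ι] [Preorder α] (a : ι → α)

-- Lengths are counted in steps: a subsequence with `L + 1` terms contributes `L`.
noncomputable def longestIncEndingAt (i : ι) : ℕ :=
  sSup {L | ∃ s : Fin (L + 1) → ι, StrictMono s ∧ StrictMono (a ∘ s) ∧ s (Fin.last L) = i}

noncomputable def longestDecStartingAt (i : ι) : ℕ :=
  sSup {L | ∃ t : Fin (L + 1) → ι, StrictMono t ∧ StrictAnti (a ∘ t) ∧ t 0 = i}

variable [Fintype ι]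

theorem bddAbove_strictMono_lengths (P : (L : ℕ) → (Fin (L + 1) → ι) → Prop) :
    BddAbove {L | ∃ s : Fin (L + 1) → ι, StrictMono s ∧ P L s} := by
  refine ⟨Fintype.card ι, fun L ⟨s, hs, _⟩ => ?_⟩
  have := Fintype.card_le_of_injective s hs.injective
  rw [Fintype.card_fin] at this
  omega

theorem sSup_strictMono_lengths_mem (P : (L : ℕ) → (Fin (L + 1) → ι) → Prop)
    (h0 : ∃ s : Fin 1 → ι, P 0 s) :
    sSup {L | ∃ s : Fin (L + 1) → ι, StrictMono s ∧ P L s} ∈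
      {L | ∃ s : Fin (L + 1) → ι, StrictMono s ∧ P L s} :=
  have ⟨s, hs⟩ := h0
  Nat.sSup_mem ⟨0, s, Subsingleton.strictMono (α := Fin 1) s, hs⟩ (bddAbove_strictMono_lengths P)

theorem longestIncEndingAt_spec (i : ι) :
    ∃ s : Fin (longestIncEndingAt a i + 1) → ι,
      StrictMono s ∧ StrictMono (a ∘ s) ∧ s (Fin.last _) = i :=
  sSup_strictMono_lengths_mem _ ⟨fun _ => i, Subsingleton.strictMono (α := Fin 1) _, rfl⟩

theorem longestDecStartingAt_spec (i : ι) :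
    ∃ t : Fin (longestDecStartingAt a i + 1) → ι,
      StrictMono t ∧ StrictAnti (a ∘ t) ∧ t 0 = i :=
  sSup_strictMono_lengths_mem _ ⟨fun _ => i, Subsingleton.strictAnti (α := Fin 1) _, rfl⟩

theorem longestIncEndingAt_lt {i j : ι} (hij : i < j) (haij : a i < a j) :
    longestIncEndingAt a i < longestIncEndingAt a j := by
  obtain ⟨s, hs, has, hsi⟩ := longestIncEndingAt_spec a i
  refine Nat.lt_of_succ_le (le_csSup (bddAbove_strictMono_lengths _) ?_)
  refine ⟨Fin.snoc s j, ?_, ?_, Fin.snoc_last _ _⟩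
  · simpa [Fin.insertNth_last'] using Fin.strictMono_insertNth_last hs j (by rwa [hsi])
  · rw [Fin.comp_snoc]
    simpa [Fin.insertNth_last'] using Fin.strictMono_insertNth_last has (a j) (by simpa [hsi])

theorem longestDecStartingAt_lt {i j : ι} (hij : i < j) (haij : a j < a i) :
    longestDecStartingAt a j < longestDecStartingAt a i := by
  obtain ⟨t, ht, hat, htj⟩ := longestDecStartingAt_spec a j
  refine Nat.lt_of_succ_le (le_csSup (bddAbove_strictMono_lengths _) ?_)
  refine ⟨Matrix.vecCons i t, ht.vecCons (by rwa [htj]), ?_, rfl⟩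
  rw [Matrix.vecCons, Fin.comp_cons]
  exact hat.vecCons (by simpa [htj])

end LongestRuns

theorem injective_longestIncEndingAt_prod_longestDecStartingAt {ι α : Type*} [LinearOrder ι]
    [Fintype ι] [LinearOrder α] {a : ι → α} (ha : Function.Injective a) :
    Function.Injective fun i => (longestIncEndingAt a i, longestDecStartingAt a i) := by
  refine Function.Injective.of_lt_imp_ne fun i j hij h => ?_
  rcases lt_or_gt_of_ne (ha.ne hij.ne) with haij | haij
  · exact (longestIncEndingAt_lt a hij haij).ne (congrArg Prod.fst h)
  · exact (longestDecStartingAt_lt a hij haij).ne' (congrArg Prod.snd h)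

theorem longestIncEndingAt_add_longestDecStartingAt_lt {ι : Type*} [Preorder ι] [Fintype ι]
    (a : ι → ℤ) {N : ℕ}
    (hN : N ∈ upperBounds {L | ∃ s : Fin L → ι, StrictMono s ∧ IncFirstModal 1 (a ∘ s)})
    (i : ι) : longestIncEndingAt a i + longestDecStartingAt a i < N := by
  obtain ⟨s, hs, has, hsi⟩ := longestIncEndingAt_spec a i
  obtain ⟨t, ht, hat, hti⟩ := longestDecStartingAt_spec a i
  have hst : s (Fin.last _) = t 0 := hsi.trans hti.symm
  exact hN ⟨_, strictMono_peakJoin hs ht hst, incFirstModal_one_peakJoin a has hat hst⟩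

theorem two_mul_card_le_of_injective_sum_lt {ι : Type*} [Fintype ι] {F : ι → ℕ × ℕ}
    (hF : Function.Injective F) {N : ℕ} (hFN : ∀ i, (F i).1 + (F i).2 < N) :
    2 * Fintype.card ι ≤ N * (N + 1) := by
  let T : Finset (Σ _ : ℕ, ℕ × ℕ) := 
    (Finset.range N).sigma Finset.HasAntidiagonal.antidiagonal
  have hcard : Fintype.card ι ≤ T.card := by
    refine Finset.card_le_card_of_injOn (fun i => ⟨(F i).1 + (F i).2, F i⟩) ?_ ?_
    · intro i _
      simp [T, hFN i]
    · intro i _ j _ h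
      exact hF (congrArg Sigma.snd h)
  have hT : T.card = ∑ k ∈ Finset.range N, (k + 1) := by
    simp [T, Finset.card_sigma]
  have gauss := Finset.sum_range_id_mul_two (N + 1)
  rw [Finset.sum_range_succ', Nat.add_sub_cancel] at gauss
  linarith

theorem stmt1_general (n : ℕ) (a : Fin n → ℤ) (ha : IsPermOn n a) (N : ℕ)
    (hN : IsGreatest {L : ℕ | ∃ s : Fin L → Fin n, StrictMono s ∧ IncFirstModal 1 (a ∘ s)} N) :
    2 * n ≤ N * (N + 1) := by
  simpa using two_mul_card_le_of_injective_sum_lt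
    (injective_longestIncEndingAt_prod_longestDecStartingAt ha.1)
    (longestIncEndingAt_add_longestDecStartingAt_lt a hN.2)

/-- If `N` is the maximum length of an increasing-first 1-modal subsequence of a permutation of
`[n]` (`n ≥ 1`), then `2n ≤ N(N+1)`. -/
theorem stmt1 (n : ℕ) (hn : 1 ≤ n) (a : Fin n → ℤ) (ha : IsPermOn n a) (N : ℕ)
    (hN : IsGreatest {L : ℕ | ∃ s : Fin L → Fin n, StrictMono s ∧ IncFirstModal 1 (a ∘ s)} N) :
    2 * n ≤ N * (N + 1) :=
  stmt1_general n a ha N hN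
end

section
/- Let (a_1,…,a_n) be a permutation of [n] and k ∈ ℕ. For each position i ∈ [n], let x(i) be the maximum length of a strictly increasing subsequence ending at position i (including a_i), and let y(i) be the maximum length of a decreasing-first k-modal subsequence starting at position i (including a_i). Then the map i ↦ (x(i), y(i)) is injective on [n]. -/
lemma extend_inc {n L : ℕ} (a : Fin n → ℤ) (s : Fin L → Fin n) (hs : StrictMono s)
    (has : StrictMono (a ∘ s)) (i j : Fin n) (hend : EndsAt s i) (hij : i < j)
    (haij : a i < a j) :
    ∃ s' : Fin (L+1) → Fin n, StrictMono s' ∧ StrictMono (a ∘ s') ∧ EndsAt s' j := by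
  obtain ⟨hL, hlast⟩ := hend
  set s' : Fin (L+1) → Fin n := fun t => if h : t.val < L then s ⟨t.val, h⟩ else j with hs'
  have hle : ∀ (t : ℕ) (ht : t < L), s ⟨t, ht⟩ ≤ i := by
    intro t ht
    rw [← hlast]
    exact hs.monotone (by simp [Fin.le_def]; omega)
  have hmono : StrictMono s' := by
    intro t u htu
    rcases lt_or_ge u.val L with hu | hu
    · have ht : t.val < L := lt_trans htu hu
      simp only [hs', dif_pos ht, dif_pos hu]
      exact hs (show (⟨t.val, ht⟩ : Fin L) < ⟨u.val, hu⟩ from htu)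
    · have ht : t.val < L := lt_of_lt_of_le htu (by omega)
      simp only [hs', dif_pos ht, dif_neg (by omega : ¬ u.val < L)]
      exact lt_of_le_of_lt (hle t.val ht) hij
  have hamono : StrictMono (a ∘ s') := by
    intro t u htu
    rcases lt_or_ge u.val L with hu | hu
    · have ht : t.val < L := lt_trans htu hu
      simp only [Function.comp, hs', dif_pos ht, dif_pos hu]
      exact has (show (⟨t.val, ht⟩ : Fin L) < ⟨u.val, hu⟩ from htu)
    · have ht : t.val < L := lt_of_lt_of_le htu (by omega)
      simp only [Function.comp, hs', dif_pos ht, dif_neg (by omega : ¬ u.val < L)]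
      have : a (s ⟨t.val, ht⟩) ≤ a i := by
        rw [← hlast]
        exact has.monotone (by simp [Fin.le_def]; omega)
      omega
  refine ⟨s', hmono, hamono, Nat.succ_pos L, ?_⟩
  simp only [hs']
  rw [dif_neg (by omega)]


lemma prepend_dec {n L k : ℕ} (a : Fin n → ℤ) (s : Fin L → Fin n) (hs : StrictMono s)
    (hmod : DecFirstModal k (a ∘ s)) (i j : Fin n) (hstart : StartsAt s j) (hij : i < j)
    (haij : a j < a i) :
    ∃ s' : Fin (L+1) → Fin n, StrictMono s' ∧ DecFirstModal k (a ∘ s') ∧ StartsAt s' i := by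
  obtain ⟨hL, hfirst⟩ := hstart
  set s' : Fin (L+1) → Fin n := fun t => if h : t.val = 0 then i else s ⟨t.val - 1, by omega⟩
    with hs'
  have hge : ∀ (t : ℕ) (ht : t < L), j ≤ s ⟨t, ht⟩ := by
    intro t ht
    rw [← hfirst]
    exact hs.monotone (by simp [Fin.le_def])
  have hmono : StrictMono s' := by
    intro t u htu
    have hu0 : u.val ≠ 0 := by omega
    simp only [hs', dif_neg hu0]
    rcases Nat.eq_zero_or_pos t.val with ht0 | ht0
    · rw [dif_pos ht0]
      exact lt_of_lt_of_le hij (hge _ _)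
    · rw [dif_neg (by omega)]
      exact hs (show (⟨t.val - 1, _⟩ : Fin L) < ⟨u.val - 1, _⟩ by
        simp [Fin.lt_def]; omega)
  obtain ⟨J, hJmono, hJ0, hJtop, hJseg⟩ := hmod
  refine ⟨s', hmono, ⟨fun ℓ => if ℓ = 0 then 0 else J ℓ + 1, ?_, ?_, ?_, ?_⟩,
    Nat.succ_pos L, by simp [hs']⟩
  · intro p q hpq
    dsimp only
    rcases Nat.eq_zero_or_pos p with hp | hp
    · simp [hp]
    · rw [if_neg (by omega), if_neg (by omega)]
      exact Nat.succ_le_succ (hJmono hpq)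
  · simp
  · dsimp only
    rw [if_neg (by omega)]
    omega
  · intro ℓ t hℓ h1 h2 ht ht1
    dsimp only at h1 h2
    rcases Nat.eq_zero_or_pos t with ht0 | ht0
    · -- first step: new decreasing step, ℓ must be 0? not nec, but Even ℓ needed... 
      have hℓ0 : ℓ = 0 := by by_contra h; rw [if_neg h] at h1; omega
      subst hℓ0 ht0
      simp only [if_pos (Even.zero)]
      have e1 : s' ⟨1, ht1⟩ = s ⟨0, hL⟩ := by simp [hs']
      have e0 : s' ⟨0, ht⟩ = i := by simp [hs']
      simp only [Function.comp, e1, e0, hfirst]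
      exact haij
    · have h1' : J ℓ ≤ t - 1 := by
        rcases Nat.eq_zero_or_pos ℓ with hℓ0 | hℓp
        · subst hℓ0; omega
        · rw [if_neg (by omega)] at h1; omega
      have h2' : (t - 1) + 1 ≤ J (ℓ + 1) := by
        rw [if_neg (by omega)] at h2; omega
      have htL : t - 1 < L := by omega
      have ht1L : (t - 1) + 1 < L := by omega
      have := hJseg ℓ (t - 1) hℓ h1' h2' htL ht1L
      have e1 : s' ⟨t, ht⟩ = s ⟨t - 1, htL⟩ := by
        simp only [hs', dif_neg (by omega : ¬ t = 0)]
      have e2 : s' ⟨t + 1, ht1⟩ = s ⟨(t - 1) + 1, ht1L⟩ := by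
        simp only [hs', dif_neg (by omega : ¬ t + 1 = 0)]
        congr 1
        simp only [Fin.mk.injEq]
        omega
      simp only [Function.comp] at this ⊢
      rw [e1, e2]
      exact this


/-- main -/
theorem stmt4 (n : ℕ) (a : Fin n → ℤ) (ha : IsPermOn n a) (k : ℕ) (x y : Fin n → ℕ)
    (hx : ∀ i : Fin n, IsGreatest
      {L : ℕ | ∃ s : Fin L → Fin n, StrictMono s ∧ StrictMono (a ∘ s) ∧ EndsAt s i} (x i))
    (hy : ∀ i : Fin n, IsGreatest
      {L : ℕ | ∃ s : Fin L → Fin n, StrictMono s ∧ DecFirstModal k (a ∘ s) ∧ StartsAt s i} (y i)) :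
    Function.Injective (fun i => (x i, y i)) := by
  intro i j heq
  simp only [Prod.mk.injEq] at heq
  obtain ⟨hxij, hyij⟩ := heq
  by_contra hne
  rcases lt_trichotomy i j with hij | hij | hij
  · rcases lt_trichotomy (a i) (a j) with haij | haij | haij
    · obtain ⟨s, hs1, hs2, hs3⟩ := (hx i).1
      obtain ⟨s', h1, h2, h3⟩ := extend_inc a s hs1 hs2 i j hs3 hij haij
      have := (hx j).2 ⟨s', h1, h2, h3⟩
      omega
    · exact hne (ha.1 haij)
    · obtain ⟨s, hs1, hs2, hs3⟩ := (hy j).1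
      obtain ⟨s', h1, h2, h3⟩ := prepend_dec a s hs1 hs2 i j hs3 hij haij
      have := (hy i).2 ⟨s', h1, h2, h3⟩
      omega
  · exact hne hij
  · rcases lt_trichotomy (a j) (a i) with haij | haij | haij
    · obtain ⟨s, hs1, hs2, hs3⟩ := (hx j).1
      obtain ⟨s', h1, h2, h3⟩ := extend_inc a s hs1 hs2 j i hs3 hij haij
      have := (hx i).2 ⟨s', h1, h2, h3⟩
      omega
    · exact hne (ha.1 haij).symm
    · obtain ⟨s, hs1, hs2, hs3⟩ := (hy i).1
      obtain ⟨s', h1, h2, h3⟩ := prepend_dec a s hs1 hs2 j i hs3 hij haij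
      have := (hy j).2 ⟨s', h1, h2, h3⟩
      omega
end

section
/- Let (a_1,…,a_n) be a permutation of [n] and k ∈ ℕ. For each position i ∈ [n], let x(i) be the maximum length of an increasing-first k-modal subsequence ending at position i, and let y(i) be the maximum length of a decreasing-first k-modal subsequence ending at position i. Then the map i ↦ (x(i), y(i)) is injective on [n]. -/
/-!
If `i < i'` then `a i ≠ a i'`. Appending `a i'` to a `k`-modal subsequence ending at `i` keeps it
`k`-modal of the same type as soon as the step `a i → a i'` goes in the direction of the last
(`k`-th, possibly degenerate) segment. That direction is opposite for the increasing-first and the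
decreasing-first types, so one of `x`, `y` increases strictly from `i` to `i'`.
-/

theorem strictMono_snoc {α : Type*} [Preorder α] {m : ℕ} {s : Fin (m + 1) → α} {c : α}
    (hs : StrictMono s) (hc : s (Fin.last m) < c) :
    StrictMono (Fin.snoc s c : Fin (m + 2) → α) := by
  rw [Fin.strictMono_iff_lt_succ] at hs ⊢
  refine Fin.lastCases ?_ (fun i => ?_)
  · simpa using hc
  · rw [Fin.succ_castSucc, Fin.snoc_castSucc, Fin.snoc_castSucc]
    exact hs i

theorem snoc_apply_mk_of_lt {α : Type*} {m s : ℕ} (b : Fin m → α) (c : α) (hs : s < m)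
    (hs' : s < m + 1) : (Fin.snoc b c : Fin (m + 1) → α) ⟨s, hs'⟩ = b ⟨s, hs⟩ := by
  simp [Fin.snoc, hs]

theorem snoc_apply_mk_self {α : Type*} {m : ℕ} (b : Fin m → α) (c : α) (h : m < m + 1) :
    (Fin.snoc b c : Fin (m + 1) → α) ⟨m, h⟩ = c := by
  simp [Fin.snoc]

theorem snoc_neg {m : ℕ} (b : Fin m → ℤ) (c : ℤ) :
    (Fin.snoc (-b) (-c) : Fin (m + 1) → ℤ) = -Fin.snoc b c := by
  ext i
  simp only [Fin.snoc, Pi.neg_apply]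
  split_ifs <;> rfl

/- The segments are cut at `min (j ℓ) m`, so the `k`-th one absorbs the new step. -/
theorem IncFirstModal.snoc {k m : ℕ} {b : Fin (m + 1) → ℤ} {c : ℤ} (hb : IncFirstModal k b)
    (hc : if Even k then b (Fin.last m) < c else c < b (Fin.last m)) :
    IncFirstModal k (Fin.snoc b c : Fin (m + 2) → ℤ) := by
  obtain ⟨j, hmono, hj0, hjlast, hseg⟩ := hb
  refine ⟨fun ℓ => if ℓ ≤ k then min (j ℓ) m else m + 1, ?_, by simp [hj0], by simp, ?_⟩
  · intro ℓ ℓ' hℓ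
    have := hmono hℓ
    dsimp only
    split_ifs <;> omega
  intro ℓ s hℓk hjs hsj hs hs1
  simp only [if_pos hℓk] at hjs
  by_cases hsm : s + 1 ≤ m
  · have hsj' : s + 1 ≤ j (ℓ + 1) := by
      by_cases hℓ1 : ℓ + 1 ≤ k
      · simp only [if_pos hℓ1] at hsj
        omega
      · simp only [show ℓ + 1 = k + 1 by omega] at hsj ⊢
        omega
    rw [snoc_apply_mk_of_lt b c (by omega), snoc_apply_mk_of_lt b c (by omega)]
    exact hseg ℓ s hℓk (by omega) hsj' (by omega) (by omega)
  · have hs_eq : s = m := by omega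
    have hℓ : ℓ = k := by
      by_contra hne
      simp only [if_pos (show ℓ + 1 ≤ k by omega)] at hsj
      omega
    subst hs_eq hℓ
    rw [snoc_apply_mk_of_lt b c (by omega), snoc_apply_mk_self]
    exact hc

theorem decFirstModal_iff_incFirstModal_neg {k m : ℕ} {b : Fin m → ℤ} :
    DecFirstModal k b ↔ IncFirstModal k (-b) := by
  refine exists_congr fun j => and_congr_right fun _ => and_congr_right fun _ =>
    and_congr_right fun _ => forall₄_congr fun ℓ s _ _ => forall₃_congr fun _ hs hs1 => ?_
  split_ifs <;> simp

theorem DecFirstModal.snoc {k m : ℕ} {b : Fin (m + 1) → ℤ} {c : ℤ} (hb : DecFirstModal k b)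
    (hc : if Even k then c < b (Fin.last m) else b (Fin.last m) < c) :
    DecFirstModal k (Fin.snoc b c : Fin (m + 2) → ℤ) := by
  rw [decFirstModal_iff_incFirstModal_neg] at hb ⊢
  rw [← snoc_neg]
  refine hb.snoc ?_
  split_ifs at hc ⊢ <;> simpa using hc

def endingLengths {n : ℕ} (P : (m : ℕ) → (Fin m → ℤ) → Prop) (a : Fin n → ℤ) (i : Fin n) :
    Set ℕ :=
  {L | ∃ s : Fin L → Fin n, StrictMono s ∧ P L (a ∘ s) ∧ EndsAt s i}

section EndingLengths

variable {n : ℕ} {P : (m : ℕ) → (Fin m → ℤ) → Prop} {R : ℤ → ℤ → Prop} {a : Fin n → ℤ}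
  {i i' : Fin n}

theorem succ_mem_endingLengths
    (hP : ∀ m (b : Fin (m + 1) → ℤ) c, P (m + 1) b → R (b (Fin.last m)) c →
      P (m + 2) (Fin.snoc b c))
    (hii' : i < i') (hR : R (a i) (a i')) {L : ℕ} (hL : L ∈ endingLengths P a i) :
    L + 1 ∈ endingLengths P a i' := by
  obtain ⟨s, hs, hPs, hpos, hend⟩ := hL
  obtain ⟨m, rfl⟩ : ∃ m, L = m + 1 := ⟨L - 1, by omega⟩
  have hend : s (Fin.last m) = i := hend
  refine ⟨Fin.snoc s i', strictMono_snoc hs (hend ▸ hii'), ?_, by omega, snoc_apply_mk_self s i' _⟩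
  rw [Fin.comp_snoc]
  exact hP m _ _ hPs (by simpa [hend] using hR)

theorem lt_of_isGreatest_endingLengths
    (hP : ∀ m (b : Fin (m + 1) → ℤ) c, P (m + 1) b → R (b (Fin.last m)) c →
      P (m + 2) (Fin.snoc b c))
    (hii' : i < i') (hR : R (a i) (a i')) {L L' : ℕ} (hL : IsGreatest (endingLengths P a i) L)
    (hL' : IsGreatest (endingLengths P a i') L') : L < L' :=
  hL'.2 (succ_mem_endingLengths hP hii' hR hL.1)

end EndingLengths

/-- Let `x i` be the maximum length of an increasing-first `k`-modal subsequence ending at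
position `i` and `y i` the maximum length of a decreasing-first `k`-modal subsequence ending at
position `i`. Then `i ↦ (x i, y i)` is injective. -/
theorem stmt8 (n : ℕ) (a : Fin n → ℤ) (ha : IsPermOn n a) (k : ℕ) (x y : Fin n → ℕ)
    (hx : ∀ i : Fin n, IsGreatest
      {L : ℕ | ∃ s : Fin L → Fin n, StrictMono s ∧ IncFirstModal k (a ∘ s) ∧ EndsAt s i} (x i))
    (hy : ∀ i : Fin n, IsGreatest
      {L : ℕ | ∃ s : Fin L → Fin n, StrictMono s ∧ DecFirstModal k (a ∘ s) ∧ EndsAt s i} (y i)) :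
    Function.Injective (fun i => (x i, y i)) := by
  have hlt : ∀ i i', i < i' → x i < x i' ∨ y i < y i' := by
    intro i i' hii'
    have hx_lt := fun h => lt_of_isGreatest_endingLengths (P := fun _ => IncFirstModal k)
      (R := fun u v => if Even k then u < v else v < u) (fun _ _ _ hb hc => hb.snoc hc) hii' h
      (hx i) (hx i')
    have hy_lt := fun h => lt_of_isGreatest_endingLengths (P := fun _ => DecFirstModal k)
      (R := fun u v => if Even k then v < u else u < v) (fun _ _ _ hb hc => hb.snoc hc) hii' h
      (hy i) (hy i')
    rcases (ha.1.ne hii'.ne).lt_or_gt with h | h <;> by_cases hk : Even k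
    · exact .inl (hx_lt (by simpa [hk] using h))
    · exact .inr (hy_lt (by simpa [hk] using h))
    · exact .inr (hy_lt (by simpa [hk] using h))
    · exact .inl (hx_lt (by simpa [hk] using h))
  intro i i' h
  simp only [Prod.mk.injEq] at h
  rcases lt_trichotomy i i' with hii' | rfl | hi'i
  · have := hlt i i' hii'
    omega
  · rfl
  · have := hlt i' i hi'i
    omega
end

section
/- Let N ≥ 1 and let S ⊆ {1,…,N} × {1,…,N} be a set of lattice points. Suppose that for every (a,b) ∈ {1,…,N} × {1,…,N}, at least one of the following holds: |{(x,y) ∈ S : x = a and y ≤ b}| ≤ N + 1 − a, or |{(x,y) ∈ S : y = b and x ≤ a}| ≤ N + 1 − b. Then |S| ≤ N(N+1)/2. -/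
/-!
Call `q ∈ S` row-excessive if `|B_q| > N + 1 - q.2`, and let `U` be the set of grid points weakly
to the right of and below some row-excessive `q`. For `p ∈ S ∩ U` the hypothesis at `(p.1, q.2)`
cannot hold through the row, since `|B_{(p.1, q.2)}| ≥ |B_q|`; so it holds through the column,
and `|A_p| ≤ |A_{(p.1, q.2)}| ≤ N + 1 - p.1`. Points of `S \ U` are not row-excessive.
Hence `p ↦ (p.1, |A_p|)` embeds `S ∩ U` and `p ↦ (|B_p|, p.2)` embeds `S \ U` into the
triangle `x + y ≤ N + 1`, which has `N(N+1)/2` points. The images do not collide: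
`|A_p| ≤ p.2` and `|B_p| ≤ p.1`, and `U` is closed under moving right and down, so the first
image lies in `U` and the second outside it.
-/

open Finset

theorem card_le_card_of_injOn_filter_and_filter_not {α β : Type*} {s : Finset α} {t : Finset β}
    (p : α → Prop) (q : β → Prop) [DecidablePred p] [DecidablePred q] (f g : α → β)
    (hf : ∀ a ∈ s, p a → f a ∈ t ∧ q (f a)) (hf_inj : Set.InjOn f {a ∈ s | p a})
    (hg : ∀ a ∈ s, ¬p a → g a ∈ t ∧ ¬q (g a)) (hg_inj : Set.InjOn g {a ∈ s | ¬p a}) :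
    #s ≤ #t := by
  have hp : #{a ∈ s | p a} ≤ #{b ∈ t | q b} :=
    card_le_card_of_injOn f
      (fun a ha => let ⟨has, hpa⟩ := mem_filter.mp ha; mem_filter.mpr (hf a has hpa))
      (by rwa [coe_filter])
  have hnp : #{a ∈ s | ¬p a} ≤ #{b ∈ t | ¬q b} :=
    card_le_card_of_injOn g
      (fun a ha => let ⟨has, hpa⟩ := mem_filter.mp ha; mem_filter.mpr (hg a has hpa))
      (by rwa [coe_filter])
  rw [← card_filter_add_card_filter_not p, ← card_filter_add_card_filter_not (s := t) q]
  exact add_le_add hp hnp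

section CountBelow

variable {α κ : Type*} [DecidableEq κ] (s : Finset α) (k : α → κ) (h : α → ℕ)

def countBelow (p : α) : ℕ := #{r ∈ s | k r = k p ∧ h r ≤ h p}

variable {s k h}

theorem countBelow_subset {p p' : α} (hk : k p = k p') (hh : h p ≤ h p') :
    {r ∈ s | k r = k p ∧ h r ≤ h p} ⊆ {r ∈ s | k r = k p' ∧ h r ≤ h p'} :=
  monotone_filter_right s fun _ _ ⟨hkr, hhr⟩ => ⟨hkr.trans hk, hhr.trans hh⟩

theorem countBelow_mono {p p' : α} (hk : k p = k p') (hh : h p ≤ h p') :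
    countBelow s k h p ≤ countBelow s k h p' :=
  card_le_card (countBelow_subset hk hh)

theorem countBelow_pos {p : α} (hp : p ∈ s) : 0 < countBelow s k h p :=
  card_pos.mpr ⟨p, mem_filter.mpr ⟨hp, rfl, le_rfl⟩⟩

theorem countBelow_lt {p q : α} (hq : q ∈ s) (hk : k p = k q) (hh : h p < h q) :
    countBelow s k h p < countBelow s k h q := by
  refine card_lt_card ⟨countBelow_subset hk hh.le, ?_⟩
  intro hsub
  have := (mem_filter.mp (hsub (mem_filter.mpr ⟨hq, rfl, le_rfl⟩))).2.2
  omega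

theorem countBelow_le (hh : ∀ r ∈ s, 1 ≤ h r) (hinj : Set.InjOn (fun r => (k r, h r)) s)
    (p : α) : countBelow s k h p ≤ h p :=
  calc countBelow s k h p ≤ #(Icc 1 (h p)) := by
        refine card_le_card_of_injOn h (fun r hr => ?_) fun r hr r' hr' hrr => ?_
        · simp only [mem_coe, mem_filter] at hr
          simp [hh r hr.1, hr.2.2]
        · simp only [mem_coe, mem_filter] at hr hr'
          exact hinj hr.1 hr'.1 (Prod.ext (hr.2.1.trans hr'.2.1.symm) hrr)
    _ = h p := by simp

theorem injOn_countBelow (hinj : Set.InjOn (fun r => (k r, h r)) s) :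
    Set.InjOn (fun r => (k r, countBelow s k h r)) s := by
  intro p hp q hq hpq
  obtain ⟨hk, hc⟩ := Prod.mk.inj hpq
  rcases lt_trichotomy (h p) (h q) with hlt | heq | hgt
  · exact absurd hc (countBelow_lt hq hk hlt).ne
  · exact hinj hp hq (Prod.ext hk heq)
  · exact absurd hc (countBelow_lt hp hk.symm hgt).ne'

end CountBelow

def triangle (N : ℕ) : Finset (ℕ × ℕ) := {c ∈ Icc 1 N ×ˢ Icc 1 N | c.1 + c.2 ≤ N + 1}

theorem two_mul_card_triangle (N : ℕ) : 2 * #(triangle N) = N * (N + 1) := by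
  induction N with
  | zero => rfl
  | succ n ih =>
    have hsplit :
        triangle (n + 1) = triangle n ∪ (Icc 1 (n + 1)).image fun x => (x, n + 2 - x) := by
      ext ⟨x, y⟩
      simp only [triangle, mem_filter, mem_product, mem_Icc, mem_union, mem_image, Prod.mk.injEq]
      constructor
      · intro h
        by_cases hxy : x + y ≤ n + 1
        · left; omega
        · right; exact ⟨x, by omega, rfl, by omega⟩
      · rintro (h | ⟨x, hx, rfl, rfl⟩) <;> omega
    have hdisj : Disjoint (triangle n) ((Icc 1 (n + 1)).image fun x => (x, n + 2 - x)) := by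
      simp only [disjoint_left, triangle, mem_filter, mem_product, mem_Icc, mem_image]
      rintro ⟨x, y⟩ h ⟨x', hx', rfl, rfl⟩
      omega
    have hinj : Set.InjOn (fun x => (x, n + 2 - x)) (Icc 1 (n + 1) : Set ℕ) :=
      fun x _ y _ h => (Prod.mk.inj h).1
    rw [hsplit, card_union_of_disjoint hdisj, card_image_of_injOn hinj, Nat.card_Icc,
      Nat.add_sub_cancel, mul_add, ih]
    ring

/-- `colCount S (a, b)` and `rowCount S (a, b)` are the cardinalities of `A_{(a,b)}` and
`B_{(a,b)}`. -/
abbrev colCount (S : Finset (ℕ × ℕ)) : ℕ × ℕ → ℕ := countBelow S Prod.fst Prod.snd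

abbrev rowCount (S : Finset (ℕ × ℕ)) : ℕ × ℕ → ℕ := countBelow S Prod.snd Prod.fst

def ColOrRowBounded (N : ℕ) (S : Finset (ℕ × ℕ)) : Prop :=
  ∀ a b, 1 ≤ a → a ≤ N → 1 ≤ b → b ≤ N →
    colCount S (a, b) ≤ N + 1 - a ∨ rowCount S (a, b) ≤ N + 1 - b

def RowExcessShadow (N : ℕ) (S : Finset (ℕ × ℕ)) (c : ℕ × ℕ) : Prop :=
  ∃ q ∈ S, N + 1 - q.2 < rowCount S q ∧ q.1 ≤ c.1 ∧ c.2 ≤ q.2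

section Grid

variable {N : ℕ} {S : Finset (ℕ × ℕ)}

theorem RowExcessShadow.mono {c c' : ℕ × ℕ} (hc : RowExcessShadow N S c) (h1 : c.1 ≤ c'.1)
    (h2 : c'.2 ≤ c.2) : RowExcessShadow N S c' :=
  let ⟨q, hq, hexcess, hq1, hq2⟩ := hc
  ⟨q, hq, hexcess, hq1.trans h1, h2.trans hq2⟩

theorem rowCount_le_of_not_rowExcessShadow {p : ℕ × ℕ} (hp : p ∈ S)
    (hsh : ¬RowExcessShadow N S p) : rowCount S p ≤ N + 1 - p.2 :=
  not_lt.mp fun hexcess => hsh ⟨p, hp, hexcess, le_rfl, le_rfl⟩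

theorem mem_Icc_product_Icc {p : ℕ × ℕ} :
    p ∈ Icc 1 N ×ˢ Icc 1 N ↔ (1 ≤ p.1 ∧ p.1 ≤ N) ∧ (1 ≤ p.2 ∧ p.2 ≤ N) := by
  simp only [mem_product, mem_Icc]

theorem colCount_le_of_rowExcessShadow (hS : S ⊆ Icc 1 N ×ˢ Icc 1 N)
    (hgood : ColOrRowBounded N S) {p : ℕ × ℕ} (hp : p ∈ S) (hsh : RowExcessShadow N S p) :
    colCount S p ≤ N + 1 - p.1 := by
  obtain ⟨q, hq, hexcess, hq1, hq2⟩ := hsh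
  obtain ⟨⟨hp1, hpN⟩, -⟩ := mem_Icc_product_Icc.mp (hS hp)
  obtain ⟨-, ⟨hq1', hqN⟩⟩ := mem_Icc_product_Icc.mp (hS hq)
  rcases hgood p.1 q.2 hp1 hpN hq1' hqN with hcol | hrow
  · exact (countBelow_mono (p := p) (p' := (p.1, q.2)) rfl hq2).trans hcol
  · have : rowCount S q ≤ rowCount S (p.1, q.2) := countBelow_mono rfl hq1
    omega

theorem mk_colCount_mem_triangle (hS : S ⊆ Icc 1 N ×ˢ Icc 1 N)
    (hgood : ColOrRowBounded N S) {p : ℕ × ℕ} (hp : p ∈ S) (hsh : RowExcessShadow N S p) :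
    (p.1, colCount S p) ∈ triangle N ∧ RowExcessShadow N S (p.1, colCount S p) := by
  have hpos : 0 < colCount S p := countBelow_pos hp
  have hle : colCount S p ≤ p.2 :=
    countBelow_le (fun r hr => (mem_Icc_product_Icc.mp (hS hr)).2.1) (fun _ _ _ _ h => h) p
  have hgood_p := colCount_le_of_rowExcessShadow hS hgood hp hsh
  obtain ⟨⟨hp1, hpN⟩, -⟩ := mem_Icc_product_Icc.mp (hS hp)
  refine ⟨mem_filter.mpr ⟨mem_Icc_product_Icc.mpr ?_, ?_⟩, hsh.mono le_rfl hle⟩ <;>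
    dsimp only <;> omega

theorem mk_rowCount_mem_triangle (hS : S ⊆ Icc 1 N ×ˢ Icc 1 N)
    {p : ℕ × ℕ} (hp : p ∈ S) (hsh : ¬RowExcessShadow N S p) :
    (rowCount S p, p.2) ∈ triangle N ∧ ¬RowExcessShadow N S (rowCount S p, p.2) := by
  have hpos : 0 < rowCount S p := countBelow_pos hp
  have hle : rowCount S p ≤ p.1 :=
    countBelow_le (fun r hr => (mem_Icc_product_Icc.mp (hS hr)).1.1)
      (fun _ _ _ _ h => Prod.swap_injective h) p
  have hgood_p := rowCount_le_of_not_rowExcessShadow hp hsh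
  obtain ⟨-, ⟨hp1, hpN⟩⟩ := mem_Icc_product_Icc.mp (hS hp)
  refine ⟨mem_filter.mpr ⟨mem_Icc_product_Icc.mpr ?_, ?_⟩,
    fun h' => hsh (h'.mono hle le_rfl)⟩ <;> dsimp only <;> omega

theorem card_le_card_triangle (hS : S ⊆ Icc 1 N ×ˢ Icc 1 N)
    (hgood : ColOrRowBounded N S) : #S ≤ #(triangle N) := by
  classical
  exact card_le_card_of_injOn_filter_and_filter_not (RowExcessShadow N S) (RowExcessShadow N S)
    (fun p => (p.1, colCount S p)) (fun p => (rowCount S p, p.2))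
    (fun p hp hsh => mk_colCount_mem_triangle hS hgood hp hsh)
    ((injOn_countBelow fun _ _ _ _ h => h).mono fun _ hp => hp.1)
    (fun p hp hsh => mk_rowCount_mem_triangle hS hp hsh)
    fun p hp q hq hpq =>
      injOn_countBelow (fun _ _ _ _ h => Prod.swap_injective h) hp.1 hq.1 (congrArg Prod.swap hpq)

end Grid

theorem stmt10_general (N : ℕ) (S : Finset (ℕ × ℕ))
    (hS : S ⊆ Finset.Icc 1 N ×ˢ Finset.Icc 1 N)
    (h : ∀ a b : ℕ, 1 ≤ a → a ≤ N → 1 ≤ b → b ≤ N →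
      (S.filter fun p => p.1 = a ∧ p.2 ≤ b).card ≤ N + 1 - a ∨
      (S.filter fun p => p.2 = b ∧ p.1 ≤ a).card ≤ N + 1 - b) :
    2 * S.card ≤ N * (N + 1) :=
  calc 2 * S.card ≤ 2 * #(triangle N) := Nat.mul_le_mul_left 2 (card_le_card_triangle hS h)
    _ = N * (N + 1) := two_mul_card_triangle N

/-- If `S ⊆ {1,…,N} × {1,…,N}` and for every grid point `(a,b)` either the column set
`{(x,y) ∈ S : x = a, y ≤ b}` has at most `N + 1 - a` points or the row set
`{(x,y) ∈ S : y = b, x ≤ a}` has at most `N + 1 - b` points, then `|S| ≤ N(N+1)/2`. -/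
theorem stmt10 (N : ℕ) (hN : 1 ≤ N) (S : Finset (ℕ × ℕ))
    (hS : S ⊆ Finset.Icc 1 N ×ˢ Finset.Icc 1 N)
    (h : ∀ a b : ℕ, 1 ≤ a → a ≤ N → 1 ≤ b → b ≤ N →
      (S.filter fun p => p.1 = a ∧ p.2 ≤ b).card ≤ N + 1 - a ∨
      (S.filter fun p => p.2 = b ∧ p.1 ≤ a).card ≤ N + 1 - b) :
    2 * S.card ≤ N * (N + 1) :=
  stmt10_general N S hS h
end

section
/- Fix an integer t ≥ 1 and define the permutation (a_1,…,a_{t²}) of [t²] by a_{qt+r+1} = qt + (t − r) for all 0 ≤ q ≤ t−1 and 0 ≤ r ≤ t−1 (i.e., t consecutive decreasing blocks of length t, each block's values all larger than those of all earlier blocks). Then the maximum length of an increasing-first 2-modal subsequence of this permutation is exactly 2t − 1. -/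
private lemma modal_key (t p q : ℕ) (ht : 1 ≤ t) (hpq : p < q) :
    (p / t * t + (t - p % t) < q / t * t + (t - q % t) → p / t < q / t) ∧
    (q / t * t + (t - q % t) < p / t * t + (t - p % t) → p / t = q / t) := by
  have h3 : p % t < t := Nat.mod_lt _ ht
  have h4 : q % t < t := Nat.mod_lt _ ht
  have hle : p / t ≤ q / t := Nat.div_le_div_right hpq.le
  rcases eq_or_lt_of_le hle with h | h
  · constructor
    · intro hlt
      exfalso
      have h1 := Nat.div_add_mod p t
      have h2 := Nat.div_add_mod q t
      rw [← h] at h2 hlt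
      rw [Nat.mul_comm t (p / t)] at h1 h2
      generalize p / t * t = X at h1 h2 hlt
      generalize p % t = mp at h1 h3 hlt
      generalize q % t = mq at h2 h4 hlt
      omega
    · exact fun _ => h
  · refine ⟨fun _ => h, fun hlt => ?_⟩
    exfalso
    have hmul : p / t * t + t ≤ q / t * t := by
      have h5 : (p / t + 1) * t ≤ q / t * t := Nat.mul_le_mul_right t h
      rw [Nat.succ_mul] at h5
      exact h5
    generalize p / t * t = A at hmul hlt
    generalize q / t * t = B at hmul hlt
    generalize p % t = mp at h3 hlt
    generalize q % t = mq at h4 hlt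
    omega

private lemma chain_lt (f : ℕ → ℕ) (lo hi : ℕ)
    (h : ∀ x, lo ≤ x → x + 1 ≤ hi → f x < f (x + 1)) :
    ∀ y, lo ≤ y → y ≤ hi → f lo + (y - lo) ≤ f y := by
  intro y
  induction y with
  | zero => intro h1 _; have h0 : lo = 0 := Nat.le_zero.mp h1; simp [h0]
  | succ n ih =>
    intro h1 h2
    rcases Nat.eq_or_lt_of_le h1 with hc | hc
    · subst hc; simp
    · have ha := ih (by omega) (by omega)
      have hb := h n (by omega) h2
      omega

private lemma chain_eq (f : ℕ → ℕ) (lo hi : ℕ)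
    (h : ∀ x, lo ≤ x → x + 1 ≤ hi → f x = f (x + 1)) :
    ∀ y, lo ≤ y → y ≤ hi → f lo = f y := by
  intro y
  induction y with
  | zero => intro h1 _; rw [Nat.le_zero.mp h1]
  | succ n ih =>
    intro h1 h2
    rcases Nat.eq_or_lt_of_le h1 with hc | hc
    · rw [hc]
    · rw [ih (by omega) (by omega), h n (by omega) h2]

private lemma same_block (t p q : ℕ) (ht : 1 ≤ t) (h : p / t = q / t) (hpq : p ≤ q) :
    q - p ≤ t - 1 := by
  have h1 := Nat.div_add_mod p t
  have h2 := Nat.div_add_mod q t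
  have h3 : p % t < t := Nat.mod_lt _ ht
  have h4 : q % t < t := Nat.mod_lt _ ht
  rw [← h] at h2
  generalize t * (p / t) = X at h1 h2
  generalize p % t = mp at h1 h3
  generalize q % t = mq at h2 h4
  omega

private lemma val_first (t x : ℕ) (ht : 1 ≤ t) :
    (x * t) / t * t + (t - (x * t) % t) = x * t + t := by
  rw [Nat.mul_div_cancel _ ht, Nat.mul_mod_left, Nat.sub_zero]

private lemma val_blk (t r : ℕ) (ht : 1 ≤ t) (hr : r < t) :
    (t * (t - 1) + r) / t * t + (t - (t * (t - 1) + r) % t) = t * (t - 1) + (t - r) := by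
  rw [Nat.mul_add_div ht, Nat.mul_add_mod, Nat.div_eq_of_lt hr, Nat.mod_eq_of_lt hr,
    Nat.add_zero, Nat.mul_comm (t - 1) t]

private def memS (t : ℕ) (ht : 1 ≤ t) (i : Fin (2 * t - 1)) : Fin (t ^ 2) :=
  ⟨if (i : ℕ) < t then (i : ℕ) * t else t * (t - 1) + ((i : ℕ) - t + 1), by
    rw [sq]
    have hi := i.isLt
    have h1 : t * (t - 1) + t = t * t := by rw [← Nat.mul_succ]; congr 1; omega
    split_ifs with h
    · have h2 : ((i : ℕ) + 1) * t ≤ t * t := Nat.mul_le_mul_right t h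
      rw [Nat.succ_mul] at h2
      omega
    · omega⟩

private lemma memS_mono (t : ℕ) (ht : 1 ≤ t) : StrictMono (memS t ht) := by
  intro i j hij
  have hij' : (i : ℕ) < (j : ℕ) := hij
  simp only [Fin.lt_def, memS]
  split_ifs with hi hj hj
  · exact (Nat.mul_lt_mul_right ht).mpr hij'
  · have h1 : (i : ℕ) * t ≤ (t - 1) * t := Nat.mul_le_mul_right t (by omega)
    rw [Nat.mul_comm (t - 1) t] at h1
    omega
  · omega
  · omega

private lemma memS_apply (t : ℕ) (ht : 1 ≤ t) (i : Fin (2 * t - 1)) :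
    ((memS t ht i : ℕ) / t * t + (t - (memS t ht i : ℕ) % t))
      = if (i : ℕ) < t then (i : ℕ) * t + t else t * (t - 1) + (t - ((i : ℕ) - t + 1)) := by
  have hi := i.isLt
  simp only [memS]
  split_ifs with h
  · exact val_first t _ ht
  · exact val_blk t _ ht (by omega)

/-- For the permutation of `[t²]` consisting of `t` consecutive decreasing blocks of length `t`
(block `q` occupying positions `qt+1, …, qt+t` with values `qt+t, …, qt+1`), the maximum length
of an increasing-first 2-modal subsequence is exactly `2t - 1`. -/
theorem stmt12 (t : ℕ) (ht : 1 ≤ t) :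
    IsGreatest {L : ℕ | ∃ s : Fin L → Fin (t ^ 2), StrictMono s ∧
      IncFirstModal 2
        ((fun i : Fin (t ^ 2) => (((i : ℕ) / t * t + (t - (i : ℕ) % t) : ℕ) : ℤ)) ∘ s)}
      (2 * t - 1) := by
  constructor
  · -- membership
    refine ⟨memS t ht, memS_mono t ht, ?_⟩
    refine ⟨fun ℓ => if ℓ = 0 then 0 else if ℓ = 1 then t - 1 else 2 * t - 2, ?_, by norm_num, ?_, ?_⟩
    · apply monotone_nat_of_le_succ
      intro n
      split_ifs
      all_goals try exact (‹False›).elim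
      all_goals omega
    · show 2 * t - 1 - 1 ≤ 2 * t - 2
      omega
    · intro ℓ x hℓ h1 h2 hs hs1
      have hval : ∀ (y : ℕ) (hy : y < 2 * t - 1),
          ((fun i : Fin (t ^ 2) => (((i : ℕ) / t * t + (t - (i : ℕ) % t) : ℕ) : ℤ)) ∘ memS t ht)
            ⟨y, hy⟩
            = (((if y < t then y * t + t else t * (t - 1) + (t - (y - t + 1))) : ℕ) : ℤ) := by
        intro y hy
        simp only [Function.comp_apply]
        rw [memS_apply t ht ⟨y, hy⟩]
      interval_cases ℓ
      · norm_num at h2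
        rw [if_pos Even.zero, hval x hs, hval (x + 1) hs1, Nat.cast_lt,
          if_pos (show x < t by omega), if_pos (show x + 1 < t by omega)]
        have e1 : (x + 1) * t = x * t + t := Nat.succ_mul x t
        omega
      · norm_num at h1 h2
        rw [if_neg (by decide : ¬ Even 1), hval (x + 1) hs1, hval x hs, Nat.cast_lt]
        rcases Nat.lt_or_ge x t with h | h
        · have hx : x = t - 1 := by omega
          rw [if_pos h, if_neg (show ¬ x + 1 < t by omega)]
          have e1 : x * t = t * (t - 1) := by rw [hx, Nat.mul_comm]
          omega
        · rw [if_neg (by omega), if_neg (by omega)]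
          omega
      · norm_num at h1 h2
        omega
  · -- upper bound
    intro L hL
    obtain ⟨s, hsm, j, hjm, hj0, hj3, hcond⟩ := hL
    rcases Nat.eq_zero_or_pos L with rfl | hL1
    · omega
    have htt : t ^ 2 = t * t := sq t
    set u := min (j 1) (L - 1) with hu
    set v := min (j 2) (L - 1) with hv
    have hj12 : j 1 ≤ j 2 := hjm (by omega)
    have huv : u ≤ v := min_le_min hj12 le_rfl
    have hu1 : u ≤ j 1 := min_le_left _ _
    have hu2 : u ≤ L - 1 := min_le_right _ _
    have hv1 : v ≤ j 2 := min_le_left _ _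
    have hv2 : v ≤ L - 1 := min_le_right _ _
    set P : ℕ → ℕ := fun x => if h : x < L then (s ⟨x, h⟩ : ℕ) else 0 with hP
    have hPlt : ∀ (x : ℕ) (hx : x < L), P x = (s ⟨x, hx⟩ : ℕ) := fun x hx => dif_pos hx
    have hmono : ∀ x, x + 1 < L → P x < P (x + 1) := by
      intro x hx
      rw [hPlt x (by omega), hPlt (x + 1) hx]
      exact hsm (Fin.mk_lt_mk.mpr (Nat.lt_succ_self x))
    have hPbound : ∀ (x : ℕ), x < L → P x < t * t := by
      intro x hx
      rw [hPlt x hx, ← htt]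
      exact (s ⟨x, hx⟩).isLt
    have hbval : ∀ (x : ℕ) (hx : x < L),
        ((fun i : Fin (t ^ 2) => (((i : ℕ) / t * t + (t - (i : ℕ) % t) : ℕ) : ℤ)) ∘ s) ⟨x, hx⟩
          = ((P x / t * t + (t - P x % t) : ℕ) : ℤ) := by
      intro x hx
      rw [hPlt x hx]
      rfl
    have hstep0 : ∀ x, x + 1 ≤ u → P x / t < P (x + 1) / t := by
      intro x hx
      have hx1 : x + 1 < L := by omega
      have hx0 : x < L := by omega
      have hc := hcond 0 x (by omega) (by omega) (by show x + 1 ≤ j 1; omega) hx0 hx1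
      rw [if_pos Even.zero, hbval x hx0, hbval (x + 1) hx1, Nat.cast_lt] at hc
      exact (modal_key t (P x) (P (x + 1)) ht (hmono x hx1)).1 hc
    have hstep1 : ∀ x, u ≤ x → x + 1 ≤ v → P x / t = P (x + 1) / t := by
      intro x hx hx'
      have hx1 : x + 1 < L := by omega
      have hx0 : x < L := by omega
      have hj1x : j 1 ≤ x := by
        rcases le_or_gt (j 1) (L - 1) with h | h
        · have : u = j 1 := min_eq_left h
          omega
        · have : u = L - 1 := min_eq_right h.le
          omega
      have hc := hcond 1 x (by omega) hj1x (by show x + 1 ≤ j 2; omega) hx0 hx1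
      rw [if_neg (by decide : ¬ Even 1), hbval x hx0, hbval (x + 1) hx1, Nat.cast_lt] at hc
      exact (modal_key t (P x) (P (x + 1)) ht (hmono x hx1)).2 hc
    have hstep2 : ∀ x, v ≤ x → x + 1 ≤ L - 1 → P x / t < P (x + 1) / t := by
      intro x hx hx'
      have hx1 : x + 1 < L := by omega
      have hx0 : x < L := by omega
      have hj2x : j 2 ≤ x := by
        rcases le_or_gt (j 2) (L - 1) with h | h
        · have : v = j 2 := min_eq_left h
          omega
        · have : v = L - 1 := min_eq_right h.le
          omega
      have hc := hcond 2 x (by omega) hj2x (by omega) hx0 hx1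
      rw [if_pos (by decide : Even 2), hbval x hx0, hbval (x + 1) hx1, Nat.cast_lt] at hc
      exact (modal_key t (P x) (P (x + 1)) ht (hmono x hx1)).1 hc
    have c1 : P 0 / t + (u - 0) ≤ P u / t :=
      chain_lt (fun x => P x / t) 0 u (fun x _ hx => hstep0 x hx) u (Nat.zero_le u) le_rfl
    have c2 : P u / t = P v / t :=
      chain_eq (fun x => P x / t) u v hstep1 v huv le_rfl
    have c3 : P v / t + (L - 1 - v) ≤ P (L - 1) / t :=
      chain_lt (fun x => P x / t) v (L - 1) hstep2 (L - 1) hv2 le_rfl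
    have c4 : P u + (v - u) ≤ P v :=
      chain_lt P u v (fun x _ hx => hmono x (by omega)) v huv le_rfl
    have c5 : P v - P u ≤ t - 1 := same_block t (P u) (P v) ht c2 (by omega)
    have c6 : P (L - 1) / t < t := by
      rw [Nat.div_lt_iff_lt_mul ht]
      exact hPbound (L - 1) (by omega)
    generalize P 0 / t = q0 at c1
    generalize P u / t = qu at c1 c2
    generalize P v / t = qv at c2 c3
    generalize P (L - 1) / t = qL at c3 c6
    omega
end

section
/- For every even integer k ≥ 2 and every integer t ≥ 1 there exists a permutation of [n] with n = k·t²/2 (namely, kt/2 consecutive decreasing blocks of length t, each block's values all larger than those of all earlier blocks) whose longest increasing-first k-modal subsequence has length at most k·t. -/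
open Finset

/-- The value at the `0`-indexed position `i` of the layered permutation of `ℕ` whose layers have
length `t`; the values start at `1`. -/
def layered (t i : ℕ) : ℕ := i / t * t + (t - i % t)

section Layered

variable {t i j : ℕ}

theorem layered_lt_of_div_lt (h : i / t < j / t) : layered t i < layered t j := by
  have ht : 0 < t := Nat.pos_of_ne_zero (by rintro rfl; simp at h)
  have hnext : i / t * t + t ≤ j / t * t := by nlinarith
  have := Nat.mod_lt j ht
  unfold layered
  omega

theorem layered_lt_of_div_eq (ht : 0 < t) (h : i / t = j / t) (hij : i < j) :
    layered t j < layered t i := by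
  have := Nat.div_add_mod i t
  have := Nat.div_add_mod j t
  have := Nat.mod_lt j ht
  unfold layered
  rw [h] at *
  omega

theorem layered_injective (ht : 0 < t) : Function.Injective (layered t) := by
  refine Function.Injective.of_lt_imp_ne fun i j hij => ?_
  rcases (Nat.div_le_div_right (c := t) hij.le).lt_or_eq with h | h
  · exact (layered_lt_of_div_lt h).ne
  · exact (layered_lt_of_div_eq ht h hij).ne'

theorem one_le_layered (ht : 0 < t) : 1 ≤ layered t i := by
  have := Nat.mod_lt i ht
  unfold layered
  omega

theorem layered_le_of_lt_mul {N : ℕ} (h : i < N * t) : layered t i ≤ N * t := by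
  have hlt : i / t < N := Nat.div_lt_of_lt_mul (by rwa [mul_comm])
  have : (i / t + 1) * t ≤ N * t := Nat.mul_le_mul_right t hlt
  unfold layered
  nlinarith [Nat.sub_le t (i % t)]

end Layered

theorem card_filter_div_eq_le {α : Type*} [Fintype α] {f : α → ℕ} (hf : Function.Injective f)
    {t : ℕ} (ht : 0 < t) (q : ℕ) : #{x | f x / t = q} ≤ t := by
  calc #{x | f x / t = q} ≤ #(range t) := by
        refine card_le_card_of_injOn (fun x => f x % t) (fun x _ => mem_range.2 (Nat.mod_lt _ ht))
          fun x hx y hy hxy => hf ?_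
        simp only [coe_filter, mem_univ, true_and] at hx hy
        exact Nat.ext_div_mod (hx.trans hy.symm) hxy
    _ = t := card_range t

theorem Fintype.card_le_add_card_mul_of_fibers {α : Type*} [Fintype α] (f : α → ℕ) {B t : ℕ}
    (hB : ∀ x, f x < B) (ht : ∀ q, #{x | f x = q} ≤ t) :
    Fintype.card α ≤ B + #{q ∈ range B | 1 < #{x | f x = q}} * t := by
  calc Fintype.card α = ∑ q ∈ range B, #{x | f x = q} :=
        card_eq_sum_card_fiberwise fun x _ => mem_range.2 (hB x)
    _ ≤ ∑ q ∈ range B, (1 + if 1 < #{x | f x = q} then t else 0) :=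
        sum_le_sum fun q _ => by have := ht q; split_ifs <;> omega
    _ = B + #{q ∈ range B | 1 < #{x | f x = q}} * t := by
        rw [sum_add_distrib, ← sum_filter, sum_const, sum_const, Finset.card_range, smul_eq_mul,
          smul_eq_mul, mul_one]

/-- `g i` is the index of the monotone segment of `b` containing the step from position `i` to
position `i + 1`. -/
structure IsSegmentIndex (k : ℕ) {m : ℕ} (b : Fin m → ℤ) (g : ℕ → ℕ) : Prop where
  monotone : Monotone g
  le : ∀ i, g i ≤ k
  lt_of_even : ∀ i j : Fin m, (j : ℕ) = i + 1 → Even (g i) → b i < b j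
  lt_of_odd : ∀ i j : Fin m, (j : ℕ) = i + 1 → Odd (g i) → b j < b i

theorem IncFirstModal.exists_isSegmentIndex {k m : ℕ} {b : Fin m → ℤ} (hb : IncFirstModal k b) :
    ∃ g, IsSegmentIndex k b g := by
  classical
  obtain ⟨j, -, hj0, hjk, hseg⟩ := hb
  refine ⟨fun s => Nat.findGreatest (fun ℓ => j ℓ ≤ s) k,
    ⟨fun s s' hss' => Nat.findGreatest_mono_left (fun ℓ h => h.trans hss') k,
      fun s => Nat.findGreatest_le k, ?_, ?_⟩⟩
  all_goals
    rintro i ⟨i', hi'⟩ rfl hpar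
    set ℓ := Nat.findGreatest (fun ℓ => j ℓ ≤ i) k
    have hℓk : ℓ ≤ k := Nat.findGreatest_le k
    have hstart : j ℓ ≤ i := Nat.findGreatest_spec (P := fun ℓ => j ℓ ≤ (i : ℕ)) (Nat.zero_le k)
      (by omega)
    have hend : (i : ℕ) + 1 ≤ j (ℓ + 1) := by
      rcases hℓk.lt_or_eq with hlt | hℓ
      · exact not_le.1 (Nat.findGreatest_is_greatest (P := fun ℓ => j ℓ ≤ (i : ℕ))
          (Nat.lt_succ_self ℓ) hlt)
      · rw [hℓ]
        omega
    have hstep := hseg ℓ i hℓk hstart hend i.isLt hi'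
  · simpa [hpar] using hstep
  · simpa [Nat.not_even_iff_odd.2 hpar] using hstep

section Blocks

variable {k m : ℕ} {b : Fin m → ℤ} {blk : Fin m → ℕ} {g : ℕ → ℕ}

theorem blk_eq_of_descending_run (hblk : Monotone blk) (hasc : ∀ i j, blk i < blk j → b i < b j)
    {i j : Fin m} (hij : i ≤ j)
    (hrun : ∀ s s' : Fin m, i ≤ s → s' ≤ j → (s' : ℕ) = s + 1 → b s' < b s) :
    blk i = blk j := by
  suffices h : ∀ n (hn : n < m), i ≤ n → n ≤ j → blk ⟨n, hn⟩ = blk i from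
    (h j j.isLt hij le_rfl).symm
  intro n hn hin hnj
  induction n, hin using Nat.le_induction with
  | base => rfl
  | succ n hin ih =>
    have hprev : blk ⟨n, by omega⟩ = blk i := ih (by omega) (by omega)
    refine le_antisymm ?_ (hprev ▸ hblk (Fin.mk_le_mk.2 n.le_succ))
    by_contra! hlt
    exact (hasc _ _ (hprev ▸ hlt)).asymm
      (hrun ⟨n, by omega⟩ ⟨n + 1, hn⟩ (Fin.mk_le_mk.2 hin) (Fin.mk_le_mk.2 hnj) rfl)

theorem IsSegmentIndex.odd_of_lt_of_blk_eq (hg : IsSegmentIndex k b g) (hblk : Monotone blk)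
    (hdesc : ∀ i j, i < j → blk i = blk j → b j < b i) {x y : Fin m} (hxy : x < y)
    (hb : blk x = blk y) : ∃ x' : Fin m, (x' : ℕ) = x + 1 ∧ blk x' = blk x ∧ Odd (g x) := by
  let x' : Fin m := ⟨x + 1, by omega⟩
  have hx' : blk x' = blk x :=
    le_antisymm (hb ▸ hblk (Fin.le_def.2 hxy)) (hblk (Fin.le_def.2 (by simp [x'])))
  refine ⟨x', rfl, hx', Nat.not_even_iff_odd.1 fun heven => ?_⟩
  exact (hg.lt_of_even x x' rfl heven).asymm (hdesc x x' (Fin.lt_def.2 (by simp [x'])) hx'.symm)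

theorem IsSegmentIndex.blk_eq_of_odd (hg : IsSegmentIndex k b g) (hblk : Monotone blk)
    (hasc : ∀ i j, blk i < blk j → b i < b j) {x x' y' : Fin m} (hxx' : x ≤ x')
    (hy' : (y' : ℕ) = x' + 1) (hgx : g x' = g x) (hodd : Odd (g x)) : blk x = blk y' := by
  refine blk_eq_of_descending_run hblk hasc (Fin.le_def.2 (by omega)) fun s s' hs hs' hss' => ?_
  have := hg.monotone hs
  have := hg.monotone (show (s : ℕ) ≤ x' by omega)
  exact hg.lt_of_odd s s' hss' (by rwa [show g s = g x by omega])

theorem IsSegmentIndex.card_multiBlocks_le (hg : IsSegmentIndex k b g) (hblk : Monotone blk)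
    (hasc : ∀ i j, blk i < blk j → b i < b j)
    (hdesc : ∀ i j, i < j → blk i = blk j → b j < b i) (B : ℕ) :
    #{q ∈ range B | 1 < #{i | blk i = q}} ≤ (k + 1) / 2 := by
  let descendsIn q ℓ := ∃ x y : Fin m, (y : ℕ) = x + 1 ∧ blk x = q ∧ blk y = q ∧ g x = 2 * ℓ + 1
  calc _ ≤ #(range ((k + 1) / 2)) := card_le_card_of_forall_subsingleton descendsIn ?_ ?_
    _ = (k + 1) / 2 := card_range _
  · intro q hq
    obtain ⟨x, hx, y, hy, hxy⟩ := one_lt_card.1 (mem_filter.1 hq).2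
    have hx : blk x = q := (mem_filter.1 hx).2
    have hy : blk y = q := (mem_filter.1 hy).2
    obtain ⟨x, y, hxy, hx, hy⟩ : ∃ x y : Fin m, x < y ∧ blk x = q ∧ blk y = q := by
      rcases lt_or_gt_of_ne hxy with h | h
      exacts [⟨x, y, h, hx, hy⟩, ⟨y, x, h, hy, hx⟩]
    obtain ⟨x', hx', hbx', ℓ, hℓ⟩ := hg.odd_of_lt_of_blk_eq hblk hdesc hxy (hx.trans hy.symm)
    exact ⟨ℓ, mem_range.2 (by have := hg.le x; omega), x, x', hx', hx, hbx'.trans hx, hℓ⟩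
  · rintro ℓ - q ⟨-, x, y, hxy, rfl, hy, hx⟩ q' ⟨-, x', y', hxy', rfl, hy', hx'⟩
    rcases le_total x x' with h | h
    · exact (hg.blk_eq_of_odd hblk hasc h hxy' (hx'.trans hx.symm) ⟨ℓ, hx⟩).trans hy'
    · exact ((hg.blk_eq_of_odd hblk hasc h hxy (hx.trans hx'.symm) ⟨ℓ, hx'⟩).trans hy).symm

theorem IncFirstModal.card_le_of_blocks {B t : ℕ} (hb : IncFirstModal k b) (hblk : Monotone blk)
    (hB : ∀ i, blk i < B) (hfiber : ∀ q, #{i | blk i = q} ≤ t)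
    (hasc : ∀ i j, blk i < blk j → b i < b j) (hdesc : ∀ i j, i < j → blk i = blk j → b j < b i) :
    m ≤ B + (k + 1) / 2 * t := by
  obtain ⟨g, hg⟩ := hb.exists_isSegmentIndex
  calc m = Fintype.card (Fin m) := (Fintype.card_fin m).symm
    _ ≤ B + #{q ∈ range B | 1 < #{i | blk i = q}} * t :=
        Fintype.card_le_add_card_mul_of_fibers blk hB hfiber
    _ ≤ B + (k + 1) / 2 * t := by
        gcongr
        exact hg.card_multiBlocks_le hblk hasc hdesc B

end Blocks

theorem stmt13_general (k t : ℕ) (hk : Even k) (ht : 1 ≤ t) :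
    ∃ a : Fin (k * t ^ 2 / 2) → ℤ, IsPermOn (k * t ^ 2 / 2) a ∧
      ∀ (L : ℕ) (s : Fin L → Fin (k * t ^ 2 / 2)), StrictMono s →
        IncFirstModal k (a ∘ s) → L ≤ k * t := by
  obtain ⟨c, rfl⟩ := hk
  have hn : (c + c) * t ^ 2 / 2 = c * t * t := by
    rw [show (c + c) * t ^ 2 = 2 * (c * t * t) by ring, Nat.mul_div_cancel_left _ two_pos]
  refine ⟨fun i => layered t i, ⟨?_, fun i => ?_⟩, fun L s hs hb => ?_⟩
  · exact (Nat.cast_injective.comp (layered_injective ht)).comp Fin.val_injective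
  · exact ⟨Nat.one_le_cast.2 (one_le_layered ht),
      Nat.cast_le.2 ((layered_le_of_lt_mul (i.isLt.trans_eq hn)).trans_eq hn.symm)⟩
  · have hbound := hb.card_le_of_blocks (blk := fun i => (s i : ℕ) / t) (B := c * t)
      (fun i j hij => Nat.div_le_div_right (hs.monotone hij))
      (fun i => Nat.div_lt_of_lt_mul ((s i).isLt.trans_eq (hn.trans (mul_comm _ _))))
      (card_filter_div_eq_le (Fin.val_injective.comp hs.injective) ht)
      (fun i j h => Nat.cast_lt.2 (layered_lt_of_div_lt h))
      (fun i j hij h => Nat.cast_lt.2 (layered_lt_of_div_eq ht h (hs hij)))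
    calc L ≤ c * t + (c + c + 1) / 2 * t := hbound
      _ = (c + c) * t := by rw [show (c + c + 1) / 2 = c by omega]; ring

/-- For every even `k ≥ 2` and `t ≥ 1` there is a permutation of `[n]`, `n = k·t²/2`, whose
longest increasing-first `k`-modal subsequence has length at most `k·t`. -/
theorem stmt13 (k t : ℕ) (hk : Even k) (hk2 : 2 ≤ k) (ht : 1 ≤ t) :
    ∃ a : Fin (k * t ^ 2 / 2) → ℤ, IsPermOn (k * t ^ 2 / 2) a ∧
      ∀ (L : ℕ) (s : Fin L → Fin (k * t ^ 2 / 2)), StrictMono s →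
        IncFirstModal k (a ∘ s) → L ≤ k * t :=
  stmt13_general k t hk ht
end

section
/- For every odd integer k ≥ 1 and every integer t ≥ 1 there exists a permutation of [n] with n = (k−1)·t²/2 + t(t−1)/2 (namely, (k−1)t/2 consecutive decreasing blocks of length t followed by decreasing blocks of lengths t−1, t−2, …, 1, where each block's values are all larger than those of all earlier blocks) whose longest increasing-first k-modal subsequence has length at most k·t. -/
namespace Stmt14Aux

/-- length of block `c` -/
def len (u t c : ℕ) : ℕ := min t (u * t + t - 1 - c)

/-- starting position of block `c` -/
def st (u t c : ℕ) : ℕ := ∑ i ∈ Finset.range c, len u t i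

/-- block of position `i` -/
def blk (u t i : ℕ) : ℕ := Nat.findGreatest (fun c => st u t c ≤ i) (u * t + t)

/-- the permutation value at position `i` (1-based value) -/
def aF (u t i : ℕ) : ℤ :=
  2 * (st u t (blk u t i) : ℤ) + (len u t (blk u t i) : ℤ) - (i : ℤ)

lemma st_succ (u t c : ℕ) : st u t (c + 1) = st u t c + len u t c :=
  Finset.sum_range_succ _ _

lemma st_mono (u t : ℕ) : Monotone (st u t) := fun _ _ h =>
  Finset.sum_le_sum_of_subset (Finset.range_subset_range.2 h)

lemma len_le_t (u t c : ℕ) : len u t c ≤ t := min_le_left _ _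

lemma len_le' (u t c : ℕ) : len u t c ≤ u * t + t - 1 - c := min_le_right _ _

lemma st_mul (u t : ℕ) : ∀ c, c ≤ u * t → st u t c = c * t := by
  intro c
  induction c with
  | zero => simp [st]
  | succ c ih =>
    intro hc
    have hlen : len u t c = t := by
      have : t ≤ u * t + t - 1 - c := by omega
      exact min_eq_left this
    rw [st_succ, ih (by omega), hlen, Nat.succ_mul]

lemma st_top (u t : ℕ) (ht : 1 ≤ t) :
    st u t (u * t + t - 1) = u * t ^ 2 + t * (t - 1) / 2 := by
  have hstep : ∀ j, j ≤ t - 1 →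
      st u t (u * t + j) = u * t * t + ∑ i ∈ Finset.range j, (t - 1 - i) := by
    intro j
    induction j with
    | zero => intro _; simpa using st_mul u t (u * t) le_rfl
    | succ j ih =>
      intro hj
      have hlen : len u t (u * t + j) = t - 1 - j := by
        have h1 : u * t + t - 1 - (u * t + j) = t - 1 - j := by omega
        unfold len
        rw [h1]
        exact min_eq_right (by omega)
      rw [show u * t + (j+1) = (u * t + j) + 1 by ring, st_succ, ih (by omega), hlen,
        Finset.sum_range_succ]
      omega
  have h1 : u * t + t - 1 = u * t + (t - 1) := by omega
  rw [h1, hstep (t-1) le_rfl]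
  have hgauss : ∑ i ∈ Finset.range (t-1), (t - 1 - i) = t * (t - 1) / 2 := by
    have hrefl : ∑ i ∈ Finset.range (t-1), (t - 1 - i)
        = ∑ i ∈ Finset.range (t-1), (i + 1) := by
      rw [← Finset.sum_range_reflect (fun i => i + 1) (t-1)]
      apply Finset.sum_congr rfl
      intro i hi
      have := Finset.mem_range.1 hi
      omega
    have h2 : (∑ i ∈ Finset.range (t-1), i) * 2 = (t-1) * (t - 1 - 1) :=
      Finset.sum_range_id_mul_two (t-1)
    have h3 : (∑ i ∈ Finset.range (t-1), (i + 1)) = (∑ i ∈ Finset.range (t-1), i) + (t-1) := by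
      rw [Finset.sum_add_distrib]
      simp
    obtain ⟨m, rfl⟩ : ∃ m, t = m + 1 := ⟨t-1, by omega⟩
    simp only [Nat.add_sub_cancel] at h2 h3 hrefl ⊢
    have h4 : (∑ i ∈ Finset.range m, (i+1)) * 2 = (m+1) * m := by
      rw [h3]
      cases m with
      | zero => simp
      | succ m' =>
        simp only [Nat.add_sub_cancel] at h2
        nlinarith [h2]
    rw [hrefl]
    omega
  rw [hgauss]
  ring_nf



section
variable (u t : ℕ)

lemma st_blk_le (i : ℕ) : st u t (blk u t i) ≤ i := by
  have h0 : st u t 0 ≤ i := by simp [st]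
  exact Nat.findGreatest_spec (P := fun c => st u t c ≤ i) (Nat.zero_le _) h0

lemma blk_lt {i : ℕ} (hi : i < st u t (u * t + t - 1)) : blk u t i < u * t + t - 1 := by
  by_contra h
  push_neg at h
  have h1 := st_mono u t h
  have h2 := st_blk_le u t i
  omega

lemma lt_st_blk_succ {i : ℕ} (hi : i < st u t (u * t + t - 1)) :
    i < st u t (blk u t i + 1) := by
  have hb := blk_lt u t hi
  have h := Nat.findGreatest_is_greatest (P := fun c => st u t c ≤ i)
    (show blk u t i < blk u t i + 1 by omega) (by omega)
  omega

lemma blk_mono {i i' : ℕ} (h : i ≤ i') : blk u t i ≤ blk u t i' :=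
  Nat.findGreatest_mono (fun _ hc => le_trans hc h) le_rfl

lemma aF_gt {i : ℕ} (hi : i < st u t (u * t + t - 1)) :
    (st u t (blk u t i) : ℤ) < aF u t i := by
  have h1 := lt_st_blk_succ u t hi
  rw [st_succ] at h1
  have h2 := st_blk_le u t i
  unfold aF
  omega

lemma aF_le (i : ℕ) : aF u t i ≤ (st u t (blk u t i) : ℤ) + (len u t (blk u t i) : ℤ) := by
  have := st_blk_le u t i
  unfold aF
  omega

lemma aF_lt_of_blk_lt {i i' : ℕ} (hi' : i' < st u t (u * t + t - 1))
    (h : blk u t i < blk u t i') : aF u t i < aF u t i' := by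
  have h1 := aF_le u t i
  have h2 : st u t (blk u t i + 1) ≤ st u t (blk u t i') := st_mono u t h
  rw [st_succ] at h2
  have h3 := aF_gt u t hi'
  omega

lemma aF_dec {i i' : ℕ} (h : blk u t i = blk u t i') (hlt : i < i') :
    aF u t i' < aF u t i := by
  unfold aF
  rw [h]
  omega

lemma blk_lt_of {i i' : ℕ} (hi' : i' < st u t (u * t + t - 1)) (hlt : i < i')
    (hv : aF u t i < aF u t i') : blk u t i < blk u t i' := by
  rcases lt_or_eq_of_le (blk_mono u t hlt.le) with h | h
  · exact h
  · exact absurd (aF_dec u t h hlt) (by omega)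

lemma blk_eq_of {i i' : ℕ} (hi' : i' < st u t (u * t + t - 1)) (hlt : i < i')
    (hv : aF u t i' < aF u t i) : blk u t i = blk u t i' := by
  rcases lt_or_eq_of_le (blk_mono u t hlt.le) with h | h
  · exact absurd (aF_lt_of_blk_lt u t hi' h) (by omega)
  · exact h

lemma aF_inj {i i' : ℕ} (hi : i < st u t (u * t + t - 1))
    (hi' : i' < st u t (u * t + t - 1)) (h : aF u t i = aF u t i') : i = i' := by
  by_contra hne
  rcases Nat.lt_or_ge i i' with hlt | hge
  · rcases lt_or_eq_of_le (blk_mono u t hlt.le) with hb | hb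
    · exact absurd (aF_lt_of_blk_lt u t hi' hb) (by omega)
    · exact absurd (aF_dec u t hb hlt) (by omega)
  · have hlt : i' < i := by omega
    rcases lt_or_eq_of_le (blk_mono u t hlt.le) with hb | hb
    · exact absurd (aF_lt_of_blk_lt u t hi hb) (by omega)
    · exact absurd (aF_dec u t hb hlt) (by omega)

lemma aF_pos {i : ℕ} (hi : i < st u t (u * t + t - 1)) : 1 ≤ aF u t i := by
  have := aF_gt u t hi
  omega

lemma aF_le_n {i : ℕ} (hi : i < st u t (u * t + t - 1)) :
    aF u t i ≤ (st u t (u * t + t - 1) : ℤ) := by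
  have h1 := aF_le u t i
  have h2 : st u t (blk u t i + 1) ≤ st u t (u * t + t - 1) := st_mono u t (blk_lt u t hi)
  rw [st_succ] at h2
  omega

end

/-- strictly decreasing run bound -/
lemma run_le (f : ℕ → ℤ) (U : ℕ) :
    ∀ d, (∀ p, U ≤ p → p < U + d → f (p + 1) + 1 ≤ f p) → f (U + d) + d ≤ f U := by
  intro d
  induction d with
  | zero => intro _; simp
  | succ d ih =>
    intro h
    have h1 := h (U + d) (by omega) (by omega)
    have h2 := ih (fun p hp hp' => h p hp (by omega))
    push_cast
    push_cast at h2
    have : U + (d + 1) = (U + d) + 1 := by ring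
    rw [this]
    linarith

lemma run_ge (f : ℕ → ℤ) (U : ℕ) (d : ℕ)
    (h : ∀ p, U ≤ p → p < U + d → f p + 1 ≤ f (p + 1)) : f U + d ≤ f (U + d) := by
  have := run_le (fun p => -f p) U d (fun p hp hp' => by
    have := h p hp hp'; simp; linarith)
  simp at this
  linarith

lemma run_const (g : ℕ → ℕ) (U : ℕ) :
    ∀ d, (∀ p, U ≤ p → p < U + d → g (p + 1) = g p) → g (U + d) = g U := by
  intro d
  induction d with
  | zero => intro _; rfl
  | succ d ih =>
    intro h
    have h1 := h (U + d) (by omega) (by omega)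
    have h2 := ih (fun p hp hp' => h p hp (by omega))
    show g (U + d + 1) = g U
    omega

lemma sum_ite_even (c : ℤ) : ∀ m : ℕ,
    (∑ ℓ ∈ Finset.range m, (if Even ℓ then (0 : ℤ) else c)) = ((m / 2 : ℕ) : ℤ) * c := by
  intro m
  induction m with
  | zero => simp
  | succ m ih =>
    rw [Finset.sum_range_succ, ih]
    rcases Nat.even_or_odd m with he | ho
    · rw [if_pos he]
      have : (m + 1) / 2 = m / 2 := by
        rcases he with ⟨e, rfl⟩; omega
      rw [this]; ring
    · rw [if_neg (Nat.not_even_iff_odd.mpr ho)]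
      have : (m + 1) / 2 = m / 2 + 1 := by
        rcases ho with ⟨e, rfl⟩; omega
      rw [this]; push_cast; ring

end Stmt14Aux

open Stmt14Aux in
/-- For every odd `k ≥ 1` and `t ≥ 1` there is a permutation of `[n]`,
`n = (k-1)·t²/2 + t(t-1)/2`, whose longest increasing-first `k`-modal subsequence has length at
most `k·t`. -/
theorem stmt14 (k t : ℕ) (hk : Odd k) (hk1 : 1 ≤ k) (ht : 1 ≤ t) :
    ∃ a : Fin ((k - 1) * t ^ 2 / 2 + t * (t - 1) / 2) → ℤ,
      IsPermOn ((k - 1) * t ^ 2 / 2 + t * (t - 1) / 2) a ∧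
      ∀ (L : ℕ) (s : Fin L → Fin ((k - 1) * t ^ 2 / 2 + t * (t - 1) / 2)), StrictMono s →
        IncFirstModal k (a ∘ s) → L ≤ k * t := by
  obtain ⟨u, hu⟩ := hk
  have hn : (k - 1) * t ^ 2 / 2 + t * (t - 1) / 2 = st u t (u * t + t - 1) := by
    rw [st_top u t ht]
    have h1 : (k - 1) * t ^ 2 = 2 * (u * t ^ 2) := by
      have : k - 1 = 2 * u := by omega
      rw [this]; ring
    rw [h1, Nat.mul_div_cancel_left _ (by norm_num : 0 < 2)]
  rw [hn]
  set N := st u t (u * t + t - 1) with hN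
  refine ⟨fun i => aF u t (i : ℕ), ⟨?_, ?_⟩, ?_⟩
  · -- injectivity
    intro i i' h
    exact Fin.ext (aF_inj u t i.isLt i'.isLt h)
  · -- range
    intro i
    exact ⟨aF_pos u t i.isLt, aF_le_n u t i.isLt⟩
  · -- main bound
    intro L s hs hmodal
    rcases Nat.eq_zero_or_pos L with rfl | hL
    · exact Nat.zero_le _
    obtain ⟨j, hjmono, hj0, hjtop, hseg⟩ := hmodal
    -- segment cut points clipped to [0, L-1]
    set J : ℕ → ℕ := fun ℓ => min (j ℓ) (L - 1) with hJdef
    have hJmono : ∀ {x y}, x ≤ y → J x ≤ J y :=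
      fun h => min_le_min (hjmono h) le_rfl
    have hJ0 : J 0 = 0 := by simp [hJdef, hj0]
    have hJtop : J (k + 1) = L - 1 := min_eq_right hjtop
    have hJle : ∀ ℓ, J ℓ ≤ L - 1 := fun ℓ => min_le_right _ _
    -- index and block functions
    have hminlt : ∀ p : ℕ, min p (L - 1) < L := fun p => by omega
    set idx : ℕ → ℕ := fun p => ((s ⟨min p (L - 1), hminlt p⟩ : Fin N) : ℕ) with hidxdef
    set β : ℕ → ℕ := fun p => blk u t (idx p) with hβdef
    have hidxN : ∀ p, idx p < N := fun p => (s _).isLt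
    -- step facts
    have hstep : ∀ ℓ p, ℓ ≤ k → J ℓ ≤ p → p + 1 ≤ J (ℓ + 1) →
        if Even ℓ then β p < β (p + 1)
        else β (p + 1) = β p ∧ aF u t (idx (p + 1)) + 1 ≤ aF u t (idx p) := by
      intro ℓ p hℓ hp hp1
      have hpL1 : p + 1 ≤ L - 1 := le_trans hp1 (hJle _)
      have hpL : p < L := by omega
      have hp1L : p + 1 < L := by omega
      have hjl : j ℓ ≤ p := by
        have := hp
        simp only [hJdef] at this
        omega
      have hjl1 : p + 1 ≤ j (ℓ + 1) := le_trans hp1 (min_le_left _ _)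
      have hres := hseg ℓ p hℓ hjl hjl1 hpL hp1L
      have hfin : (⟨min p (L - 1), hminlt p⟩ : Fin L) = ⟨p, hpL⟩ :=
        Fin.ext (min_eq_left (by omega))
      have hfin1 : (⟨min (p + 1) (L - 1), hminlt (p + 1)⟩ : Fin L) = ⟨p + 1, hp1L⟩ :=
        Fin.ext (min_eq_left (by omega))
      have hip : idx p = ((s ⟨p, hpL⟩ : Fin N) : ℕ) := by
        simp only [hidxdef, hfin]
      have hip1 : idx (p + 1) = ((s ⟨p + 1, hp1L⟩ : Fin N) : ℕ) := by
        simp only [hidxdef, hfin1]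
      have hlt : idx p < idx (p + 1) := by
        rw [hip, hip1]
        exact hs (by exact Fin.mk_lt_mk.2 (by omega))
      by_cases he : Even ℓ
      · rw [if_pos he] at hres ⊢
        have hv : aF u t (idx p) < aF u t (idx (p + 1)) := by
          rw [hip, hip1]; exact hres
        exact blk_lt_of u t (hidxN (p + 1)) hlt hv
      · rw [if_neg he] at hres ⊢
        have hv : aF u t (idx (p + 1)) < aF u t (idx p) := by
          rw [hip, hip1]; exact hres
        exact ⟨(blk_eq_of u t (hidxN (p + 1)) hlt hv).symm, by omega⟩
    -- per-segment bounds
    have hQ : ∀ ℓ, ℓ ≤ k → ((J (ℓ + 1) : ℤ) - (J ℓ : ℤ)) ≤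
        ((β (J (ℓ + 1)) : ℤ) - (β (J ℓ) : ℤ)) +
        (if Even ℓ then 0 else if ℓ = k then ((u * t : ℕ) : ℤ) + (t : ℤ) - 2 - (β (L - 1) : ℤ)
          else (t : ℤ) - 1) := by
      intro ℓ hℓ
      have hle : J ℓ ≤ J (ℓ + 1) := hJmono (by omega)
      set d : ℕ := J (ℓ + 1) - J ℓ with hd
      have hsum : J ℓ + d = J (ℓ + 1) := by omega
      by_cases he : Even ℓ
      · rw [if_pos he]
        have hrun := run_ge (fun p => (β p : ℤ)) (J ℓ) d (by
          intro p hp hp'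
          have := hstep ℓ p hℓ hp (by omega)
          rw [if_pos he] at this
          push_cast
          omega)
        rw [hsum] at hrun
        push_cast
        omega
      · rw [if_neg he]
        have hconst : β (J (ℓ + 1)) = β (J ℓ) := by
          rw [← hsum]
          exact run_const β (J ℓ) d (fun p hp hp' => by
            have := hstep ℓ p hℓ hp (by omega)
            rw [if_neg he] at this
            exact this.1)
        have hdrop := run_le (fun p => aF u t (idx p)) (J ℓ) d (by
          intro p hp hp'
          have := hstep ℓ p hℓ hp (by omega)
          rw [if_neg he] at this
          exact this.2)
        rw [hsum] at hdrop
        -- value window within the block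
        set c : ℕ := β (J ℓ) with hc
        have h1 : aF u t (idx (J ℓ)) ≤ (st u t c : ℤ) + (len u t c : ℤ) := aF_le u t _
        have h2 : (st u t (blk u t (idx (J (ℓ + 1)))) : ℤ) < aF u t (idx (J (ℓ + 1))) :=
          aF_gt u t (hidxN _)
        have h2' : blk u t (idx (J (ℓ + 1))) = c := hconst
        rw [h2'] at h2
        have hlen : (d : ℤ) ≤ (len u t c : ℤ) - 1 := by omega
        by_cases hek : ℓ = k
        · rw [if_pos hek]
          have hβL : β (L - 1) = c := by rw [← hJtop, ← hek]; exact hconst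
          have hblt : c < u * t + t - 1 := blk_lt u t (hidxN (J ℓ))
          have hlen2 := len_le' u t c
          rw [hβL, hconst]
          push_cast
          omega
        · rw [if_neg hek]
          have := len_le_t u t c
          rw [hconst]
          push_cast
          omega
    -- sum up
    have htele1 : (∑ ℓ ∈ Finset.range (k + 1), ((J (ℓ + 1) : ℤ) - (J ℓ : ℤ)))
        = (J (k + 1) : ℤ) - (J 0 : ℤ) :=
      Finset.sum_range_sub (fun ℓ => (J ℓ : ℤ)) (k + 1)
    have htele2 : (∑ ℓ ∈ Finset.range (k + 1), ((β (J (ℓ + 1)) : ℤ) - (β (J ℓ) : ℤ)))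
        = (β (J (k + 1)) : ℤ) - (β (J 0) : ℤ) :=
      Finset.sum_range_sub (fun ℓ => (β (J ℓ) : ℤ)) (k + 1)
    set D : ℕ → ℤ := fun ℓ =>
      if Even ℓ then 0 else if ℓ = k then ((u * t : ℕ) : ℤ) + (t : ℤ) - 2 - (β (L - 1) : ℤ)
        else (t : ℤ) - 1 with hD
    have hsumD : (∑ ℓ ∈ Finset.range (k + 1), D ℓ)
        ≤ (u : ℤ) * ((t : ℤ) - 1) + (((u * t : ℕ) : ℤ) + (t : ℤ) - 2 - (β (L - 1) : ℤ)) := by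
      rw [Finset.sum_range_succ]
      have hk' : ¬ Even k := by
        rw [Nat.not_even_iff_odd]; exact ⟨u, hu⟩
      have hDk : D k = ((u * t : ℕ) : ℤ) + (t : ℤ) - 2 - (β (L - 1) : ℤ) := by
        simp [hD, hk']
      have hrest : (∑ ℓ ∈ Finset.range k, D ℓ)
          = (∑ ℓ ∈ Finset.range k, (if Even ℓ then (0 : ℤ) else (t : ℤ) - 1)) := by
        apply Finset.sum_congr rfl
        intro ℓ hℓ
        have : ℓ ≠ k := by have := Finset.mem_range.1 hℓ; omega
        simp only [hD, this, if_false]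
      rw [hDk, hrest, sum_ite_even]
      have hk2 : k / 2 = u := by omega
      rw [hk2]
    -- combine
    have hmain : (J (k + 1) : ℤ) - (J 0 : ℤ) ≤
        ((β (J (k + 1)) : ℤ) - (β (J 0) : ℤ)) + (∑ ℓ ∈ Finset.range (k + 1), D ℓ) := by
      rw [← htele1, ← htele2, ← Finset.sum_add_distrib]
      apply Finset.sum_le_sum
      intro ℓ hℓ
      exact hQ ℓ (by have := Finset.mem_range.1 hℓ; omega)
    have hβJtop : β (J (k + 1)) = β (L - 1) := by rw [hJtop]
    have hβ0 : (0 : ℤ) ≤ (β (J 0) : ℤ) := by positivity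
    have hL1 : ((J (k + 1) : ℕ) : ℤ) = (L : ℤ) - 1 := by
      rw [hJtop]; push_cast; omega
    have hfinal : (L : ℤ) ≤ ((k * t : ℕ) : ℤ) := by
      rw [hβJtop] at hmain
      rw [hL1, hJ0] at hmain
      have := hsumD
      have hut : ((u * t : ℕ) : ℤ) = (u : ℤ) * (t : ℤ) := by push_cast; ring
      have hkt : ((k * t : ℕ) : ℤ) = (2 * (u : ℤ) + 1) * (t : ℤ) := by
        rw [hu]; push_cast; ring
      rw [hkt]
      have hu0 : (0 : ℤ) ≤ (u : ℤ) := by positivity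
      have hβ0' : (0 : ℤ) ≤ (β 0 : ℤ) := by positivity
      have ht' : (1 : ℤ) ≤ (t : ℤ) := by exact_mod_cast ht
      push_cast at hmain hsumD ⊢
      nlinarith [hmain, hsumD, hβ0']
    exact_mod_cast hfinal
end

section
/- For every integer k ≥ 1 and every integer t ≥ 1 there exists a permutation of [n] with n = (2k+1)·t² − t (namely, consecutive decreasing blocks of lengths t, t+1, …, 2t−1, followed by (k−1)t decreasing blocks of length 2t, followed by decreasing blocks of lengths 2t−1, 2t−2, …, t, where each block's values are all larger than those of all earlier blocks) whose longest k-modal subsequence (increasing-first or decreasing-first) has length at most (2k+1)·t. -/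
namespace Stmt15Aux


/-- size of block `b` (1-indexed), with `B` blocks total. -/
def sz (t B b : ℕ) : ℕ := t - 1 + min b (min (B + 1 - b) (t+1))

/-- cumulative block sizes. -/
def Pc (t B b : ℕ) : ℕ := ∑ c ∈ Finset.range b, sz t B (c+1)

lemma sz_ge (t B b : ℕ) (ht : 1 ≤ t) (hb : 1 ≤ b) (hb' : b ≤ B) : t ≤ sz t B b := by
  unfold sz; omega

lemma sz_le_2t (t B b : ℕ) (ht : 1 ≤ t) : sz t B b ≤ 2 * t := by
  unfold sz; omega

lemma sz_le_left (t B b : ℕ) : sz t B b ≤ t - 1 + b := by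
  unfold sz; omega

lemma sz_le_right (t B b : ℕ) (ht : 1 ≤ t) (hb : b ≤ B) : sz t B b ≤ t + (B - b) := by
  unfold sz; omega

lemma Pc_succ (t B b : ℕ) : Pc t B (b+1) = Pc t B b + sz t B (b+1) := by
  unfold Pc; rw [Finset.sum_range_succ]

lemma Pc_mono (t B : ℕ) : Monotone (Pc t B) := by
  apply monotone_nat_of_le_succ
  intro b; rw [Pc_succ]; omega

lemma Pc_lt_succ (t B b : ℕ) (ht : 1 ≤ t) (hb : b < B) :
    Pc t B b < Pc t B (b+1) := by
  have := sz_ge t B (b+1) ht (by omega) (by omega)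
  rw [Pc_succ]; omega

lemma Pc_top_aux (t B : ℕ) (ht : 1 ≤ t) (hB : 2*t ≤ B) :
    2 * Pc t B B + 2 * (B * (t+1)) = 2 * (B * (t-1)) + 2 * (t*(t+1) + (B-t)*(t+1)*2) := by
  have gauss : (∑ c ∈ Finset.range t, (c+1)) * 2 = t*(t+1) := by
    have h := Finset.sum_range_id_mul_two (t+1)
    have h2 : (∑ c ∈ Finset.range (t+1), c) = (∑ c ∈ Finset.range t, (c+1)) + 0 :=
      Finset.sum_range_succ' _ t
    have h3 : (t+1) * (t+1-1) = t * (t+1) := by rw [Nat.add_sub_cancel]; ring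
    omega
  have S1 : ∀ m, t ≤ m →
      (∑ c ∈ Finset.range m, min (c+1) (t+1)) * 2 = t*(t+1) + (m - t)*(t+1)*2 := by
    intro m hm
    induction m, hm using Nat.le_induction with
    | base =>
      have he : (∑ c ∈ Finset.range t, min (c+1) (t+1)) = ∑ c ∈ Finset.range t, (c+1) := by
        apply Finset.sum_congr rfl
        intro c hc
        simp only [Finset.mem_range] at hc
        omega
      rw [he, gauss, Nat.sub_self]
      ring
    | succ m hm ih =>
      calc (∑ c ∈ Finset.range (m+1), min (c+1) (t+1)) * 2
          = (∑ c ∈ Finset.range m, min (c+1) (t+1)) * 2 + (t+1) * 2 := by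
            rw [Finset.sum_range_succ, show min (m+1) (t+1) = t+1 from by omega]; ring
        _ = t*(t+1) + (m - t)*(t+1)*2 + (t+1)*2 := by rw [ih]
        _ = t*(t+1) + ((m - t) + 1)*(t+1)*2 := by ring
        _ = t*(t+1) + (m + 1 - t)*(t+1)*2 := by rw [show (m - t) + 1 = m + 1 - t from by omega]
  have S2 : (∑ c ∈ Finset.range B, min (B - c) (t+1))
      = ∑ c ∈ Finset.range B, min (c+1) (t+1) := by
    have h := Finset.sum_range_reflect (fun c => min (c+1) (t+1)) B
    rw [← h]
    apply Finset.sum_congr rfl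
    intro c hc
    simp only [Finset.mem_range] at hc
    congr 1
    omega
  have E1 : Pc t B B = B*(t-1) + ∑ c ∈ Finset.range B, min (c+1) (min (B - c) (t+1)) := by
    unfold Pc sz
    rw [Finset.sum_add_distrib, Finset.sum_const, Finset.card_range, smul_eq_mul]
    congr 1
    apply Finset.sum_congr rfl
    intro c hc
    simp only [Finset.mem_range] at hc
    congr 2
    omega
  have E2 : (∑ c ∈ Finset.range B, min (c+1) (min (B - c) (t+1))) + B * (t+1)
      = (∑ c ∈ Finset.range B, min (c+1) (t+1)) + ∑ c ∈ Finset.range B, min (B - c) (t+1) := by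
    have hL : (∑ c ∈ Finset.range B, min (c+1) (min (B - c) (t+1))) + B * (t+1)
        = ∑ c ∈ Finset.range B, (min (c+1) (min (B - c) (t+1)) + (t+1)) := by
      rw [Finset.sum_add_distrib, Finset.sum_const, Finset.card_range, smul_eq_mul]
    rw [hL, ← Finset.sum_add_distrib]
    apply Finset.sum_congr rfl
    intro c hc
    simp only [Finset.mem_range] at hc
    omega
  have S1B := S1 B (by omega)
  rw [S2] at E2
  omega

/-- the total: `Pc t B B + t = (2k+1)t²` when `B = (k+1)t`. -/
lemma Pc_top (k t : ℕ) (hk : 1 ≤ k) (ht : 1 ≤ t) :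
    Pc t ((k+1)*t) ((k+1)*t) + t = (2*k+1)*t^2 := by
  obtain ⟨c, rfl⟩ : ∃ c, t = c + 1 := ⟨t - 1, by omega⟩
  have hB : 2*(c+1) ≤ (k+1)*(c+1) := Nat.mul_le_mul_right (c+1) (by omega)
  have h := Pc_top_aux (c+1) ((k+1)*(c+1)) (by omega) hB
  rw [Nat.add_sub_cancel] at h
  rw [show (k+1)*(c+1) - (c+1) = k*(c+1) from by
    have : (k+1)*(c+1) = k*(c+1) + (c+1) := by ring
    omega] at h
  have hZ : ((2 : ℤ) * Pc (c+1) ((k+1)*(c+1)) ((k+1)*(c+1)) + 2 * (((k+1)*(c+1)) * ((c:ℤ)+1+1)))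
      = 2 * ((((k:ℤ)+1)*((c:ℤ)+1)) * (c:ℤ)) + 2 * (((c:ℤ)+1)*((c:ℤ)+1+1) + ((k:ℤ)*((c:ℤ)+1))*((c:ℤ)+1+1)*2) := by
    exact_mod_cast h
  have goalZ : ((Pc (c+1) ((k+1)*(c+1)) ((k+1)*(c+1)) + (c+1) : ℕ) : ℤ)
      = (((2*k+1)*(c+1)^2 : ℕ) : ℤ) := by
    push_cast
    nlinarith [hZ]
  exact_mod_cast goalZ




/-- block (0-indexed) containing position `i` (0-indexed). -/
noncomputable def blk (t B i : ℕ) : ℕ := sInf {b | i < Pc t B (b+1)}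

/-- value at position `i` (1-indexed value, in `[Pc blk + 1, Pc (blk+1)]`). -/
noncomputable def aZ (t B i : ℕ) : ℤ := (Pc t B (blk t B i) : ℤ) + Pc t B (blk t B i + 1) - i

variable {t B : ℕ}

lemma Pc_mono' (t B : ℕ) : Monotone (Pc t B) := by
  apply monotone_nat_of_le_succ
  intro b; unfold Pc; rw [Finset.sum_range_succ]; omega

lemma blk_spec (ht : 1 ≤ t) {i : ℕ} (hi : i < Pc t B B) :
    blk t B i < B ∧ Pc t B (blk t B i) ≤ i ∧ i < Pc t B (blk t B i + 1) := by
  have hne : (B - 1) ∈ {b | i < Pc t B (b+1)} := by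
    simp only [Set.mem_setOf_eq]
    have hB : 1 ≤ B := by
      by_contra h
      have : B = 0 := by omega
      rw [this] at hi
      simp [Pc] at hi
    rw [show B - 1 + 1 = B from by omega]
    exact hi
  have hmem : i < Pc t B (blk t B i + 1) := Nat.sInf_mem (Set.nonempty_of_mem hne)
  have hle : blk t B i ≤ B - 1 := Nat.sInf_le hne
  have hB : 1 ≤ B := by
    by_contra h
    have : B = 0 := by omega
    rw [this] at hi; simp [Pc] at hi
  refine ⟨by omega, ?_, hmem⟩
  rcases Nat.eq_zero_or_pos (blk t B i) with h0|h0
  · rw [h0]; simp [Pc]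
  · by_contra h
    push_neg at h
    have : blk t B i - 1 ∈ {b | i < Pc t B (b+1)} := by
      simp only [Set.mem_setOf_eq]
      rw [show blk t B i - 1 + 1 = blk t B i from by omega]
      omega
    have h5 : blk t B i ≤ blk t B i - 1 := Nat.sInf_le this
    omega

lemma blk_eq (ht : 1 ≤ t) {i b : ℕ} (hb : b < B) (h1 : Pc t B b ≤ i) (h2 : i < Pc t B (b+1)) :
    blk t B i = b := by
  have hi : i < Pc t B B := lt_of_lt_of_le h2 (Pc_mono' t B (by omega))
  obtain ⟨hlt, hl, hr⟩ := blk_spec ht hi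
  rcases Nat.lt_trichotomy (blk t B i) b with h|h|h
  · have : Pc t B (blk t B i + 1) ≤ Pc t B b := Pc_mono' t B (by omega)
    omega
  · exact h
  · have : Pc t B (b+1) ≤ Pc t B (blk t B i) := Pc_mono' t B (by omega)
    omega

-- value range
lemma aZ_range (ht : 1 ≤ t) {i : ℕ} (hi : i < Pc t B B) :
    (Pc t B (blk t B i) : ℤ) < aZ t B i ∧ aZ t B i ≤ (Pc t B (blk t B i + 1) : ℤ) := by
  obtain ⟨hlt, hl, hr⟩ := blk_spec ht hi
  unfold aZ
  constructor <;> [skip; skip] <;> push_cast <;> omega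

lemma aZ_pos (ht : 1 ≤ t) {i : ℕ} (hi : i < Pc t B B) : 1 ≤ aZ t B i := by
  have h := (aZ_range ht hi).1
  have : (0:ℤ) ≤ (Pc t B (blk t B i) : ℤ) := Int.ofNat_nonneg _
  omega

lemma aZ_le (ht : 1 ≤ t) {i : ℕ} (hi : i < Pc t B B) : aZ t B i ≤ (Pc t B B : ℤ) := by
  have h := (aZ_range ht hi).2
  have hlt := (blk_spec ht hi).1
  have : Pc t B (blk t B i + 1) ≤ Pc t B B := Pc_mono' t B (by omega)
  have : ((Pc t B (blk t B i + 1)) : ℤ) ≤ (Pc t B B : ℤ) := by exact_mod_cast this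
  omega

-- monotone block
lemma blk_mono (ht : 1 ≤ t) {i i' : ℕ} (hii : i ≤ i') (hi' : i' < Pc t B B) :
    blk t B i ≤ blk t B i' := by
  have hi : i < Pc t B B := by omega
  obtain ⟨h1, h2, h3⟩ := blk_spec ht hi
  obtain ⟨h1', h2', h3'⟩ := blk_spec ht hi'
  by_contra h
  push_neg at h
  have : Pc t B (blk t B i' + 1) ≤ Pc t B (blk t B i) := Pc_mono' t B (by omega)
  omega

/-- increasing step forces strictly increasing block. -/
lemma blk_lt_of_inc (ht : 1 ≤ t) {i i' : ℕ} (hii : i < i') (hi' : i' < Pc t B B)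
    (hv : aZ t B i < aZ t B i') : blk t B i < blk t B i' := by
  have hle := blk_mono ht (le_of_lt hii) hi'
  rcases Nat.lt_or_ge (blk t B i) (blk t B i') with h|h
  · exact h
  · have heq : blk t B i = blk t B i' := by omega
    unfold aZ at hv
    rw [heq] at hv
    omega

/-- decreasing step forces equal block. -/
lemma blk_eq_of_dec (ht : 1 ≤ t) {i i' : ℕ} (hii : i < i') (hi' : i' < Pc t B B)
    (hv : aZ t B i' < aZ t B i) : blk t B i' = blk t B i := by
  have hle := blk_mono ht (le_of_lt hii) hi'
  rcases Nat.lt_or_ge (blk t B i) (blk t B i') with h|h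
  · exfalso
    have hi : i < Pc t B B := by omega
    have h2 := (aZ_range ht hi).2
    have h1 := (aZ_range ht hi').1
    have : Pc t B (blk t B i + 1) ≤ Pc t B (blk t B i') := Pc_mono' t B (by omega)
    have : ((Pc t B (blk t B i + 1)) : ℤ) ≤ (Pc t B (blk t B i') : ℤ) := by exact_mod_cast this
    omega
  · omega

/-- injectivity. -/
lemma aZ_inj (ht : 1 ≤ t) {i i' : ℕ} (hii : i < i') (hi' : i' < Pc t B B) :
    aZ t B i ≠ aZ t B i' := by
  intro h
  rcases Nat.lt_trichotomy (blk t B i) (blk t B i') with hc|hc|hc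
  · have hi : i < Pc t B B := by omega
    have h2 := (aZ_range ht hi).2
    have h1 := (aZ_range ht hi').1
    have hm : Pc t B (blk t B i + 1) ≤ Pc t B (blk t B i') := Pc_mono' t B (by omega)
    have : ((Pc t B (blk t B i + 1)) : ℤ) ≤ (Pc t B (blk t B i') : ℤ) := by exact_mod_cast hm
    omega
  · unfold aZ at h
    rw [hc] at h
    omega
  · have := blk_mono ht (le_of_lt hii) hi'
    omega

/-- The core counting lemma. -/
lemma core (k t L p : ℕ) (hk : 1 ≤ k) (ht : 1 ≤ t) (hL : 1 ≤ L) (hp : p ≤ 1)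
    (π : ℕ → ℕ)
    (hπN : ∀ q, π q < Pc t ((k+1)*t) ((k+1)*t))
    (hπmono : ∀ q q', q < q' → q' ≤ L - 1 → π q < π q')
    (j : ℕ → ℕ) (hjmono : Monotone j) (hj0 : j 0 = 0) (hjtop : L - 1 ≤ j (k+1))
    (hstep : ∀ ℓ q, ℓ ≤ k → j ℓ ≤ q → q + 1 ≤ j (ℓ+1) → q + 1 ≤ L - 1 →
      (if ℓ % 2 = p then aZ t ((k+1)*t) (π (q+1)) < aZ t ((k+1)*t) (π q)
       else aZ t ((k+1)*t) (π q) < aZ t ((k+1)*t) (π (q+1)))) :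
    L ≤ (2*k+1)*t := by
  set B := (k+1)*t with hB
  set e := (k + p) % 2 with he
  set j' : ℕ → ℕ := fun q => min (j q) (L-1) with hj'
  set γ : ℕ → ℕ := fun ℓ => blk t B (π (j' ℓ)) with hγdef
  have hj'mono : ∀ ℓ, j' ℓ ≤ j' (ℓ+1) := by
    intro ℓ
    have := hjmono (show ℓ ≤ ℓ+1 by omega)
    simp only [hj']
    omega
  have hγlt : ∀ ℓ, γ ℓ < B := fun ℓ => (blk_spec ht (hπN _)).1
  -- strict monotone shift for π
  have hπshift : ∀ u v, u ≤ v → v ≤ L - 1 → v + π u ≤ u + π v := by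
    intro u v huv hv
    induction v, huv using Nat.le_induction with
    | base => omega
    | succ v hv' ih =>
      have h1 : π v < π (v+1) := hπmono v (v+1) (by omega) hv
      have := ih (by omega)
      omega
  -- decreasing segments: block constant, and bounded length
  have seg_dec : ∀ ℓ, ℓ ≤ k → ℓ % 2 = p →
      γ (ℓ+1) = γ ℓ ∧ j' (ℓ+1) + 1 ≤ j' ℓ + sz t B (γ ℓ + 1) := by
    intro ℓ hℓ hpar
    have const : ∀ q, j' ℓ ≤ q → q ≤ j' (ℓ+1) → blk t B (π q) = blk t B (π (j' ℓ)) := by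
      intro q hq1 hq2
      induction q, hq1 using Nat.le_induction with
      | base => rfl
      | succ q hq ih =>
        have hq2' : q ≤ j' (ℓ+1) := by omega
        have hqL : q + 1 ≤ L - 1 := by
          have : j' (ℓ+1) ≤ L - 1 := by simp only [hj']; omega
          omega
        have hjq : j ℓ ≤ q := by
          have h1 : j' ℓ = min (j ℓ) (L-1) := rfl
          have h2 : j' (ℓ+1) ≤ L - 1 := by simp only [hj']; omega
          omega
        have hjq1 : q + 1 ≤ j (ℓ+1) := by
          have h2 : j' (ℓ+1) = min (j (ℓ+1)) (L-1) := rfl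
          omega
        have hv := hstep ℓ q hℓ hjq hjq1 hqL
        rw [if_pos hpar] at hv
        have hblk : blk t B (π (q+1)) = blk t B (π q) :=
          blk_eq_of_dec ht (hπmono q (q+1) (by omega) hqL) (hπN _) hv
        rw [hblk, ih hq2']
    have hγeq : γ (ℓ+1) = γ ℓ := by
      simp only [hγdef]
      exact const (j' (ℓ+1)) (hj'mono ℓ) le_rfl
    refine ⟨hγeq, ?_⟩
    -- positions of endpoints lie in the same block
    have hbspec1 := blk_spec ht (hπN (j' ℓ))
    have hbspec2 := blk_spec ht (hπN (j' (ℓ+1)))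
    have hγ2 : blk t B (π (j' (ℓ+1))) = γ ℓ := by
      simpa [hγdef] using hγeq
    rw [hγ2] at hbspec2
    have hshift := hπshift (j' ℓ) (j' (ℓ+1)) (hj'mono ℓ) (by simp only [hj']; omega)
    have hPsucc := Pc_succ t B (γ ℓ)
    -- Pc (γℓ) ≤ π (j' ℓ), π (j'(ℓ+1)) < Pc (γℓ + 1)
    have h1 : Pc t B (γ ℓ) ≤ π (j' ℓ) := hbspec1.2.1
    have h2 : π (j' (ℓ+1)) < Pc t B (γ ℓ + 1) := hbspec2.2.2
    omega
  -- increasing segments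
  have seg_inc : ∀ ℓ, ℓ ≤ k → ℓ % 2 ≠ p →
      j' (ℓ+1) + γ ℓ ≤ j' ℓ + γ (ℓ+1) := by
    intro ℓ hℓ hpar
    have claim : ∀ q, j' ℓ ≤ q → q ≤ j' (ℓ+1) → q + γ ℓ ≤ j' ℓ + blk t B (π q) := by
      intro q hq1 hq2
      induction q, hq1 using Nat.le_induction with
      | base => simp only [hγdef]; omega
      | succ q hq ih =>
        have hq2' : q ≤ j' (ℓ+1) := by omega
        have hqL : q + 1 ≤ L - 1 := by
          have : j' (ℓ+1) ≤ L - 1 := by simp only [hj']; omega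
          omega
        have hjq : j ℓ ≤ q := by
          have h1 : j' ℓ = min (j ℓ) (L-1) := rfl
          have h2 : j' (ℓ+1) ≤ L - 1 := by simp only [hj']; omega
          omega
        have hjq1 : q + 1 ≤ j (ℓ+1) := by
          have h2 : j' (ℓ+1) = min (j (ℓ+1)) (L-1) := rfl
          omega
        have hv := hstep ℓ q hℓ hjq hjq1 hqL
        rw [if_neg hpar] at hv
        have hblk : blk t B (π q) < blk t B (π (q+1)) :=
          blk_lt_of_inc ht (hπmono q (q+1) (by omega) hqL) (hπN _) hv
        have := ih hq2'
        omega
    have := claim (j' (ℓ+1)) (hj'mono ℓ) le_rfl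
    simpa [hγdef] using this
  -- main numeric downward induction
  have main : ∀ m ℓ, ℓ + m = k + e →
      L - 1 + γ ℓ + (1-e)*t ≤ j' ℓ + B + ((k + 2 - e - ℓ)/2) * (2*t-1) := by
    intro m
    induction m with
    | zero =>
      intro ℓ hℓ
      rcases (show e = 0 ∨ e = 1 from by omega) with he0|he1
      · -- e = 0 : ℓ = k, last segment decreasing
        have hℓk : ℓ = k := by omega
        have hpar : ℓ % 2 = p := by omega
        obtain ⟨hγeq, hlen⟩ := seg_dec ℓ (by omega) hpar
        have hend : j' (ℓ+1) = L - 1 := by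
          simp only [hj']
          have : j ℓ ≤ j (ℓ+1) := hjmono (by omega)
          have h2 : L - 1 ≤ j (k+1) := hjtop
          have h3 : ℓ + 1 = k + 1 := by omega
          rw [h3]
          omega
        have hszb : sz t B (γ ℓ + 1) ≤ t + (B - (γ ℓ + 1)) :=
          sz_le_right t B _ ht (by have := hγlt ℓ; omega)
        rw [he0]
        have hD : (k + 2 - 0 - ℓ)/2 = 1 := by omega
        rw [hD, one_mul]
        have := hγlt ℓ
        omega
      · -- e = 1 : base at ℓ = k+1
        have hℓk : ℓ = k + 1 := by omega
        have hend : j' ℓ = L - 1 := by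
          rw [hℓk]
          simp only [hj']
          omega
        have hγB := hγlt ℓ
        rw [he1]
        generalize (k + 2 - 1 - ℓ)/2 * (2*t-1) = X
        omega
    | succ m ih =>
      intro ℓ hℓ
      have hℓk : ℓ ≤ k := by omega
      have ih' := ih (ℓ+1) (by omega)
      by_cases hpar : ℓ % 2 = p
      · obtain ⟨hγeq, hlen⟩ := seg_dec ℓ hℓk hpar
        have hsz2t : sz t B (γ ℓ + 1) ≤ 2*t := sz_le_2t t B _ ht
        have hD : (k + 2 - e - ℓ)/2 = (k + 2 - e - (ℓ+1))/2 + 1 := by omega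
        rw [hD, add_mul, one_mul]
        rw [hγeq] at ih'
        generalize hX : (k + 2 - e - (ℓ+1))/2 * (2*t-1) = X at ih' ⊢
        omega
      · have hlen := seg_inc ℓ hℓk hpar
        have hD : (k + 2 - e - ℓ)/2 = (k + 2 - e - (ℓ+1))/2 := by omega
        rw [hD]
        generalize hX : (k + 2 - e - (ℓ+1))/2 * (2*t-1) = X at ih' ⊢
        omega
  -- conclusion
  have H1 := main (k + e - 1) 1 (by omega)
  have hj'0 : j' 0 = 0 := by simp only [hj', hj0]; omega
  have hQ : (k + 2 - e - 1) = k + 1 - e := by omega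
  rw [hQ] at H1
  rcases (show p = 0 ∨ p = 1 from by omega) with hp0|hp1
  · -- decreasing-first
    subst hp0
    obtain ⟨hγeq, hlen⟩ := seg_dec 0 (by omega) (by omega)
    simp only [zero_add] at hγeq hlen
    rw [hj'0] at hlen
    simp only [Nat.zero_add] at hlen
    have hszb : sz t B (γ 0 + 1) ≤ t - 1 + (γ 0 + 1) := sz_le_left t B _
    rw [hγeq] at H1
    obtain ⟨q, rfl | rfl⟩ := Nat.even_or_odd' k
    · -- k = 2q, e = 0
      have he0 : e = 0 := by omega
      rw [he0] at H1
      have hQ2 : (2*q + 1 - 0)/2 = q := by omega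
      rw [hQ2] at H1
      -- arithmetic: L ≤ (2*(2q)+1)*t
      have h2t : (2*t-1)+1 = 2*t := by omega
      have hq2t : q * (2*t-1) + q = q * (2*t) := by
        calc q*(2*t-1)+q = q*((2*t-1)+1) := by ring
        _ = q*(2*t) := by rw [h2t]
      have hBval : B = (2*q+1)*t := by rw [hB]
      have hexp1 : q * (2*t) = 2*(q*t) := by ring
      have hexp2 : (2*q+1)*t = 2*(q*t) + t := by ring
      have hexp3 : (2*(2*q)+1)*t = 4*(q*t) + t := by ring
      rw [hexp3]
      omega
    · -- k = 2q+1, e = 1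
      have he1 : e = 1 := by omega
      rw [he1] at H1
      have hQ2 : (2*q + 1 + 1 - 1)/2 = q := by omega
      rw [hQ2] at H1
      have h2t : (2*t-1)+1 = 2*t := by omega
      have hq2t : q * (2*t-1) + q = q * (2*t) := by
        calc q*(2*t-1)+q = q*((2*t-1)+1) := by ring
        _ = q*(2*t) := by rw [h2t]
      have hBval : B = (2*q+2)*t := by rw [hB]
      have hexp1 : q * (2*t) = 2*(q*t) := by ring
      have hexp2 : (2*q+2)*t = 2*(q*t) + 2*t := by ring
      have hexp3 : (2*(2*q+1)+1)*t = 4*(q*t) + 3*t := by ring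
      rw [hexp3]
      omega
  · -- increasing-first
    subst hp1
    have hlen := seg_inc 0 (by omega) (by omega)
    simp only [zero_add] at hlen
    rw [hj'0] at hlen
    simp only [Nat.zero_add] at hlen
    obtain ⟨q, rfl | rfl⟩ := Nat.even_or_odd' k
    · -- k = 2q, e = 1
      have he1 : e = 1 := by omega
      rw [he1] at H1
      have hQ2 : (2*q + 1 - 1)/2 = q := by omega
      rw [hQ2] at H1
      have hq1 : 1 ≤ q := by omega
      have h2t : (2*t-1)+1 = 2*t := by omega
      have hq2t : q * (2*t-1) + q = q * (2*t) := by
        calc q*(2*t-1)+q = q*((2*t-1)+1) := by ring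
        _ = q*(2*t) := by rw [h2t]
      have hBval : B = (2*q+1)*t := by rw [hB]
      have hexp1 : q * (2*t) = 2*(q*t) := by ring
      have hexp2 : (2*q+1)*t = 2*(q*t) + t := by ring
      have hexp3 : (2*(2*q)+1)*t = 4*(q*t) + t := by ring
      have hqt : q ≤ q * t := Nat.le_mul_of_pos_right q ht
      rw [hexp3]
      omega
    · -- k = 2q+1, e = 0
      have he0 : e = 0 := by omega
      rw [he0] at H1
      have hQ2 : (2*q + 1 + 1 - 0)/2 = q + 1 := by omega
      rw [hQ2] at H1
      have h2t : (2*t-1)+1 = 2*t := by omega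
      have hq2t : (q+1) * (2*t-1) + (q+1) = (q+1) * (2*t) := by
        calc (q+1)*(2*t-1)+(q+1) = (q+1)*((2*t-1)+1) := by ring
        _ = (q+1)*(2*t) := by rw [h2t]
      have hBval : B = (2*q+2)*t := by rw [hB]
      have hexp1 : (q+1) * (2*t) = 2*(q*t) + 2*t := by ring
      have hexp2 : (2*q+2)*t = 2*(q*t) + 2*t := by ring
      have hexp3 : (2*(2*q+1)+1)*t = 4*(q*t) + 3*t := by ring
      rw [hexp3]
      omega


end Stmt15Aux

open Stmt15Aux in
/-- For every `k ≥ 1` and `t ≥ 1` there is a permutation of `[n]`, `n = (2k+1)·t² - t`, whose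
longest `k`-modal subsequence (increasing-first or decreasing-first) has length at most
`(2k+1)·t`. -/
theorem stmt15 (k t : ℕ) (hk : 1 ≤ k) (ht : 1 ≤ t) :
    ∃ a : Fin ((2 * k + 1) * t ^ 2 - t) → ℤ, IsPermOn ((2 * k + 1) * t ^ 2 - t) a ∧
      ∀ (L : ℕ) (s : Fin L → Fin ((2 * k + 1) * t ^ 2 - t)), StrictMono s →
        (IncFirstModal k (a ∘ s) ∨ DecFirstModal k (a ∘ s)) → L ≤ (2 * k + 1) * t := by
  set B := (k+1)*t with hB
  set n := (2 * k + 1) * t ^ 2 - t with hn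
  have hnN : n = Pc t B B := by
    have h := Pc_top k t hk ht
    rw [← hB] at h
    omega
  have hvalN : ∀ i : Fin n, (i : ℕ) < Pc t B B := by
    intro i; rw [← hnN]; exact i.isLt
  refine ⟨fun i => aZ t B i, ⟨?_, ?_⟩, ?_⟩
  · -- injective
    intro i i' h
    by_contra hne
    rcases lt_trichotomy i i' with hc|hc|hc
    · exact aZ_inj ht (show (i:ℕ) < (i':ℕ) from hc) (hvalN i') h
    · exact hne hc
    · exact aZ_inj ht (show (i':ℕ) < (i:ℕ) from hc) (hvalN i) h.symm
  · -- bounds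
    intro i
    refine ⟨aZ_pos ht (hvalN i), ?_⟩
    have h := aZ_le ht (hvalN i)
    show aZ t B (i:ℕ) ≤ (n:ℤ)
    have hc : ((Pc t B B : ℕ) : ℤ) = ((n:ℕ) : ℤ) := by exact_mod_cast hnN.symm
    omega
  · -- main bound
    intro L sel hsel hmod
    rcases Nat.eq_zero_or_pos L with hL0|hL
    · omega
    have hminlt : ∀ q : ℕ, min q (L-1) < L := fun q => by omega
    set π : ℕ → ℕ := fun q => if h : q < L then (sel ⟨q, h⟩ : ℕ) else (sel ⟨L-1, by omega⟩ : ℕ)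
      with hπ
    have hπval : ∀ q (h : q < L), π q = (sel ⟨q, h⟩ : ℕ) := by
      intro q h
      simp only [hπ, dif_pos h]
    have hπN : ∀ q, π q < Pc t B B := by
      intro q
      simp only [hπ]
      split <;> exact hvalN _
    have hπmono : ∀ q q', q < q' → q' ≤ L - 1 → π q < π q' := by
      intro q q' hqq hq'
      rw [hπval q (by omega), hπval q' (by omega)]
      exact hsel (show (⟨q, by omega⟩ : Fin L) < ⟨q', by omega⟩ from by
        simp [Fin.lt_def]; omega)
    rcases hmod with hm|hm
    · -- increasing-first : p = 1
      obtain ⟨j, hjmono, hj0, hjtop, hjstep⟩ := hm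
      refine core k t L 1 hk ht hL (by omega) π hπN hπmono j hjmono hj0 hjtop ?_
      intro ℓ q hℓ hq hq1 hqL
      have hs : q < L := by omega
      have hs1 : q + 1 < L := by omega
      have h := hjstep ℓ q hℓ hq hq1 hs hs1
      rw [hπval q hs, hπval (q+1) hs1]
      by_cases hev : Even ℓ
      · rw [if_pos hev] at h
        rw [if_neg (by rw [Nat.even_iff] at hev; omega)]
        exact h
      · rw [if_neg hev] at h
        rw [if_pos (by rw [Nat.even_iff] at hev; omega)]
        exact h
    · -- decreasing-first : p = 0
      obtain ⟨j, hjmono, hj0, hjtop, hjstep⟩ := hm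
      refine core k t L 0 hk ht hL (by omega) π hπN hπmono j hjmono hj0 hjtop ?_
      intro ℓ q hℓ hq hq1 hqL
      have hs : q < L := by omega
      have hs1 : q + 1 < L := by omega
      have h := hjstep ℓ q hℓ hq hq1 hs hs1
      rw [hπval q hs, hπval (q+1) hs1]
      by_cases hev : Even ℓ
      · rw [if_pos hev] at h
        rw [if_pos (by rw [Nat.even_iff] at hev; omega)]
        exact h
      · rw [if_neg hev] at h
        rw [if_neg (by rw [Nat.even_iff] at hev; omega)]
        exact h
end
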